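/- arXiv:1804.01230 — 8 statements merged into one kernel-verified Lean document; each statement's English description precedes it below -/
import Mathlib

section
/- Let h : ℝ^p → ℝ be a seminorm, X ∈ ℝ^{n×p}, y ∈ ℝ^n, and let β̂ minimize β ↦ ‖Xβ - y‖² + 2h(β). Write y = Xβ* + ε. Then for every u ∈ ℝ^p with ‖Xu‖ ≤ 1, we have εᵀXu - h(u) ≤ ‖X(β̂ - β*)‖. -/
open scoped BigOperators

/-- Noise barrier lower bound: for any seminorm penalty `h`, any minimizer
`β̂` of `β ↦ ‖Xβ - y‖² + 2h(β)` with `y = Xβ* + ε`, and any `u` with `‖Xu‖ ≤ 1`,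
we have `⟪ε, Xu⟫ - h(u) ≤ ‖X(β̂ - β*)‖`. -/
theorem noise_barrier_lower_bound {n p : ℕ}
    (h : EuclideanSpace ℝ (Fin p) → ℝ)
    (h_nonneg : ∀ β, 0 ≤ h β)
    (h_tri : ∀ β₁ β₂, h (β₁ + β₂) ≤ h β₁ + h β₂)
    (h_homog : ∀ (a : ℝ) (β : EuclideanSpace ℝ (Fin p)), h (a • β) = |a| * h β)
    (X : EuclideanSpace ℝ (Fin p) →ₗ[ℝ] EuclideanSpace ℝ (Fin n))
    (ε : EuclideanSpace ℝ (Fin n))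
    (βstar βhat : EuclideanSpace ℝ (Fin p))
    (y : EuclideanSpace ℝ (Fin n))
    (hy : y = X βstar + ε)
    (hmin : ∀ β : EuclideanSpace ℝ (Fin p),
      ‖X βhat - y‖ ^ 2 + 2 * h βhat ≤ ‖X β - y‖ ^ 2 + 2 * h β)
    (u : EuclideanSpace ℝ (Fin p)) (hu : ‖X u‖ ≤ 1) :
    (inner ℝ ε (X u) : ℝ) - h u ≤ ‖X (βhat - βstar)‖ := by
  have hXu2 : ‖X u‖ ^ 2 ≤ 1 := by nlinarith [norm_nonneg (X u)]
  refine le_of_forall_pos_le_add ?_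
  intro δ hδ
  have key := hmin (βhat + δ • u)
  have hX : X (βhat + δ • u) - y = (X βhat - y) + δ • X u := by
    rw [map_add, map_smul]; abel
  rw [hX] at key
  have hnorm : ‖(X βhat - y) + δ • X u‖ ^ 2
      = ‖X βhat - y‖ ^ 2 + 2 * (δ * inner ℝ (X βhat - y) (X u)) + δ ^ 2 * ‖X u‖ ^ 2 := by
    rw [norm_add_sq_real, real_inner_smul_right, norm_smul, Real.norm_eq_abs,
      mul_pow, sq_abs]
  have hh : h (βhat + δ • u) ≤ h βhat + δ * h u := by
    calc h (βhat + δ • u) ≤ h βhat + h (δ • u) := h_tri _ _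
    _ = h βhat + |δ| * h u := by rw [h_homog]
    _ = h βhat + δ * h u := by rw [abs_of_pos hδ]
  have hiber : (inner ℝ (X βhat - y) (X u) : ℝ)
      = inner ℝ (X (βhat - βstar)) (X u) - inner ℝ ε (X u) := by
    have : X βhat - y = X (βhat - βstar) - ε := by
      rw [map_sub, hy]; abel
    rw [this, inner_sub_left]
  have hcs : (inner ℝ (X (βhat - βstar)) (X u) : ℝ) ≤ ‖X (βhat - βstar)‖ := by
    calc (inner ℝ (X (βhat - βstar)) (X u) : ℝ) ≤ ‖X (βhat - βstar)‖ * ‖X u‖ :=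
      real_inner_le_norm _ _
    _ ≤ ‖X (βhat - βstar)‖ * 1 := by
        exact mul_le_mul_of_nonneg_left hu (norm_nonneg _)
    _ = ‖X (βhat - βstar)‖ := mul_one _
  rw [hnorm, hiber] at key
  nlinarith [key, hcs, hδ, hXu2, sq_nonneg δ]
end

section
/- Let h be a seminorm on ℝ^p and suppose Xβ* = 0. Let β̂ minimize β ↦ ‖Xβ - ε‖² + 2h(β) (i.e., y = ε). Then ‖Xβ̂‖ = sup over u ∈ ℝ^p with ‖Xu‖ ≤ 1 of (εᵀXu - h(u)). -/
private lemma quad_aux (A B : ℝ) (H : ∀ t : ℝ, 0 < t → t < 1 → 0 ≤ -2*t*A + t^2*B) :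
    A ≤ 0 := by
  by_contra hA
  push_neg at hA
  have hB : 0 ≤ B := by
    have := H (1/2) (by norm_num) (by norm_num)
    nlinarith
  set t : ℝ := min (1/2) (A / (B + 1)) with ht
  have hApos : 0 < A / (B + 1) := by positivity
  have ht0 : 0 < t := lt_min (by norm_num) hApos
  have ht1 : t < 1 := lt_of_le_of_lt (min_le_left _ _) (by norm_num)
  have htA : t ≤ A / (B + 1) := min_le_right _ _
  have h1 : t * (B + 1) ≤ A := by
    have := (le_div_iff₀ (by positivity : (0:ℝ) < B + 1)).mp htA
    linarith
  have := H t ht0 ht1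
  nlinarith

/-- If `Xβ* = 0` (equivalently, `y = ε`), then the prediction error of the
seminorm-penalized least squares estimator equals the noise barrier:
`‖Xβ̂‖ = sup_{u : ‖Xu‖ ≤ 1} (⟪ε, Xu⟫ - h(u))`. -/
theorem noise_barrier_equality_no_signal {n p : ℕ}
    (h : EuclideanSpace ℝ (Fin p) → ℝ)
    (h_nonneg : ∀ β, 0 ≤ h β)
    (h_tri : ∀ β₁ β₂, h (β₁ + β₂) ≤ h β₁ + h β₂)
    (h_homog : ∀ (a : ℝ) (β : EuclideanSpace ℝ (Fin p)), h (a • β) = |a| * h β)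
    (X : EuclideanSpace ℝ (Fin p) →ₗ[ℝ] EuclideanSpace ℝ (Fin n))
    (ε : EuclideanSpace ℝ (Fin n))
    (βhat : EuclideanSpace ℝ (Fin p))
    (hmin : ∀ β : EuclideanSpace ℝ (Fin p),
      ‖X βhat - ε‖ ^ 2 + 2 * h βhat ≤ ‖X β - ε‖ ^ 2 + 2 * h β) :
    ‖X βhat‖ = ⨆ u : {u : EuclideanSpace ℝ (Fin p) // ‖X u‖ ≤ 1},
      ((inner ℝ ε (X u.1) : ℝ) - h u.1) := by
  have h0 : h 0 = 0 := by
    have := h_homog 0 0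
    simpa using this
  -- expansion lemma
  have expand : ∀ (v : EuclideanSpace ℝ (Fin n)) (t : ℝ),
      ‖(X βhat - ε) + t • v‖ ^ 2
        = ‖X βhat - ε‖ ^ 2 + 2 * t * (inner ℝ (X βhat - ε) v : ℝ) + t ^ 2 * ‖v‖ ^ 2 := by
    intro v t
    have hs : ‖t • v‖ ^ 2 = t ^ 2 * ‖v‖ ^ 2 := by
      rw [norm_smul, mul_pow, Real.norm_eq_abs, sq_abs]
    rw [norm_add_sq_real, real_inner_smul_right, hs]
    ring
  -- key1 : ∀ u, ⟪ε - X βhat, X u⟫ ≤ h u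
  have key1 : ∀ u, (inner ℝ (ε - X βhat) (X u) : ℝ) ≤ h u := by
    intro u
    have := quad_aux ((inner ℝ (ε - X βhat) (X u) : ℝ) - h u) (‖X u‖ ^ 2) ?_
    · linarith
    intro t ht0 _
    have hm := hmin (βhat + t • u)
    have hXe : X (βhat + t • u) - ε = (X βhat - ε) + t • X u := by
      simp [map_add, map_smul]; abel
    rw [hXe, expand] at hm
    have hh : h (βhat + t • u) ≤ h βhat + t * h u := by
      calc h (βhat + t • u) ≤ h βhat + h (t • u) := h_tri _ _
        _ = h βhat + t * h u := by rw [h_homog, abs_of_pos ht0]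
    have hinn : (inner ℝ (X βhat - ε) (X u) : ℝ) = -(inner ℝ (ε - X βhat) (X u) : ℝ) := by
      rw [← inner_neg_left]; norm_num
    rw [hinn] at hm
    nlinarith
  -- key2 : h βhat ≤ ⟪ε - X βhat, X βhat⟫
  have key2 : h βhat ≤ (inner ℝ (ε - X βhat) (X βhat) : ℝ) := by
    have := quad_aux (h βhat - (inner ℝ (ε - X βhat) (X βhat) : ℝ)) (‖X βhat‖ ^ 2) ?_
    · linarith
    intro t ht0 ht1
    have hm := hmin ((1 - t) • βhat)
    have hXe : X ((1 - t) • βhat) - ε = (X βhat - ε) + (-t) • X βhat := by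
      simp [map_smul, sub_smul]; module
    rw [hXe, expand] at hm
    have hh : h ((1 - t) • βhat) = (1 - t) * h βhat := by
      rw [h_homog, abs_of_pos (by linarith)]
    rw [hh] at hm
    have hinn : (inner ℝ (X βhat - ε) (X βhat) : ℝ) = -(inner ℝ (ε - X βhat) (X βhat) : ℝ) := by
      rw [← inner_neg_left]; norm_num
    rw [hinn] at hm
    nlinarith
  have e2 : (inner ℝ (ε - X βhat) (X βhat) : ℝ) = h βhat :=
    le_antisymm (key1 βhat) key2
  -- bounds for the sup
  have hbound : ∀ u : {u : EuclideanSpace ℝ (Fin p) // ‖X u‖ ≤ 1},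
      (inner ℝ ε (X u.1) : ℝ) - h u.1 ≤ ‖X βhat‖ := by
    rintro ⟨u, hu⟩
    have h1 : (inner ℝ ε (X u) : ℝ) - h u ≤ (inner ℝ (X βhat) (X u) : ℝ) := by
      have := key1 u
      have hsplit : (inner ℝ (ε - X βhat) (X u) : ℝ)
          = (inner ℝ ε (X u) : ℝ) - (inner ℝ (X βhat) (X u) : ℝ) := inner_sub_left _ _ _
      linarith [hsplit ▸ this]
    have h2 : (inner ℝ (X βhat) (X u) : ℝ) ≤ ‖X βhat‖ * ‖X u‖ := real_inner_le_norm _ _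
    have h3 : ‖X βhat‖ * ‖X u‖ ≤ ‖X βhat‖ * 1 :=
      mul_le_mul_of_nonneg_left hu (norm_nonneg _)
    simp only [mul_one] at h3
    linarith
  have hne : Nonempty {u : EuclideanSpace ℝ (Fin p) // ‖X u‖ ≤ 1} :=
    ⟨⟨0, by simp⟩⟩
  have hbdd : BddAbove (Set.range fun u : {u : EuclideanSpace ℝ (Fin p) // ‖X u‖ ≤ 1} =>
      (inner ℝ ε (X u.1) : ℝ) - h u.1) := by
    refine ⟨‖X βhat‖, ?_⟩
    rintro x ⟨u, rfl⟩
    exact hbound u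
  refine le_antisymm ?_ (ciSup_le hbound)
  by_cases hz : X βhat = 0
  · have : ‖X βhat‖ = 0 := by simp [hz]
    rw [this]
    have hle := le_ciSup hbdd (⟨0, by simp⟩ : {u : EuclideanSpace ℝ (Fin p) // ‖X u‖ ≤ 1})
    simpa [h0] using hle
  · have hnorm : 0 < ‖X βhat‖ := norm_pos_iff.mpr hz
    set u : EuclideanSpace ℝ (Fin p) := (‖X βhat‖)⁻¹ • βhat with hu
    have hXu : ‖X u‖ = 1 := by
      rw [hu, map_smul, norm_smul, norm_inv, norm_norm, inv_mul_cancel₀ hnorm.ne']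
    have hval : (inner ℝ ε (X u) : ℝ) - h u = ‖X βhat‖ := by
      have hinn : (inner ℝ ε (X u) : ℝ) = ‖X βhat‖⁻¹ * (inner ℝ ε (X βhat) : ℝ) := by
        rw [hu, map_smul, real_inner_smul_right]
      have hhu : h u = ‖X βhat‖⁻¹ * h βhat := by
        rw [hu, h_homog, abs_of_pos (by positivity)]
      have hsplit : (inner ℝ ε (X βhat) : ℝ)
          = (inner ℝ (ε - X βhat) (X βhat) : ℝ) + (inner ℝ (X βhat) (X βhat) : ℝ) := by
        rw [inner_sub_left]; ring
      have hself : (inner ℝ (X βhat) (X βhat) : ℝ) = ‖X βhat‖ ^ 2 :=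
        real_inner_self_eq_norm_sq _
      rw [hinn, hhu, hsplit, e2, hself]
      field_simp
      ring
    have hle := le_ciSup hbdd (⟨u, hXu.le⟩ : {u : EuclideanSpace ℝ (Fin p) // ‖X u‖ ≤ 1})
    simp only at hle
    linarith
end

section
/- Let h be a seminorm on ℝ^p, X ∈ ℝ^{n×p}, and let β* be a minimizer of h over {β : Xβ = Xβ*}. If β* ≠ 0, then h(β*)/‖Xβ*‖ ≤ LSB(β*) < +∞, where LSB(β*) = sup_{β : Xβ ≠ Xβ*} (h(β*) - h(β))/‖X(β* - β)‖. In particular, since β* minimizes h on the affine set {β : Xβ = Xβ*}, there exists a subgradient d of h at β* of the form d = Xᵀλ₀ for some λ₀ ∈ ℝ^n, and LSB(β*) ≤ ‖λ₀‖. -/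
set_option maxHeartbeats 1000000 in
/-- If `β* ≠ 0` minimizes the seminorm `h` over `{β : Xβ = Xβ*}` and
`Xβ* ≠ 0`, then `h(β*)/‖Xβ*‖ ≤ LSB(β*) < ∞`; moreover there is a subgradient of `h`
at `β*` of the form `Xᵀλ₀` and `LSB(β*) ≤ ‖λ₀‖`. -/
theorem lsb_finite_and_lower_bound {n p : ℕ}
    (h : EuclideanSpace ℝ (Fin p) → ℝ)
    (h_nonneg : ∀ β, 0 ≤ h β)
    (h_tri : ∀ β₁ β₂, h (β₁ + β₂) ≤ h β₁ + h β₂)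
    (h_homog : ∀ (a : ℝ) (β : EuclideanSpace ℝ (Fin p)), h (a • β) = |a| * h β)
    (X : EuclideanSpace ℝ (Fin p) →ₗ[ℝ] EuclideanSpace ℝ (Fin n))
    (βstar : EuclideanSpace ℝ (Fin p)) (hβ : βstar ≠ 0) (hXβ : X βstar ≠ 0)
    (hmin : ∀ β : EuclideanSpace ℝ (Fin p), X β = X βstar → h βstar ≤ h β) :
    ∃ lam₀ : EuclideanSpace ℝ (Fin n),
      (∀ β : EuclideanSpace ℝ (Fin p),
          (inner ℝ lam₀ (X (β - βstar)) : ℝ) ≤ h β - h βstar) ∧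
      BddAbove (Set.range fun β : {β : EuclideanSpace ℝ (Fin p) // X β ≠ X βstar} =>
        (h βstar - h β.1) / ‖X (βstar - β.1)‖) ∧
      h βstar / ‖X βstar‖ ≤
        (⨆ β : {β : EuclideanSpace ℝ (Fin p) // X β ≠ X βstar},
          (h βstar - h β.1) / ‖X (βstar - β.1)‖) ∧
      (⨆ β : {β : EuclideanSpace ℝ (Fin p) // X β ≠ X βstar},
          (h βstar - h β.1) / ‖X (βstar - β.1)‖) ≤ ‖lam₀‖ := by
  classical
  -- shifted function g
  set g : EuclideanSpace ℝ (Fin p) → ℝ := fun v => h (βstar + v) - h βstar with hgdef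
  have h_zero : h 0 = 0 := by
    have := h_homog 0 0
    simpa using this
  have hconv : ∀ a : ℝ, 0 ≤ a → a ≤ 1 → ∀ v : EuclideanSpace ℝ (Fin p), g (a • v) ≤ a * g v := by
    intro a ha ha1 v
    have key : h (βstar + a • v) ≤ a * h (βstar + v) + (1 - a) * h βstar := by
      have e : βstar + a • v = a • (βstar + v) + (1 - a) • βstar := by
        module
      rw [e]
      calc h (a • (βstar + v) + (1 - a) • βstar)
          ≤ h (a • (βstar + v)) + h ((1 - a) • βstar) := h_tri _ _
        _ = a * h (βstar + v) + (1 - a) * h βstar := by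
            rw [h_homog, h_homog, abs_of_nonneg ha, abs_of_nonneg (by linarith)]
    simp only [hgdef]
    nlinarith
  have hmono : ∀ (v : EuclideanSpace ℝ (Fin p)) (t s : ℝ), 0 < t → t ≤ s → g (t • v) / t ≤ g (s • v) / s := by
    intro v t s ht hts
    have hs : 0 < s := lt_of_lt_of_le ht hts
    have h1 : g (t • v) ≤ (t / s) * g (s • v) := by
      have := hconv (t / s) (by positivity) (by rw [div_le_one hs]; exact hts) (s • v)
      rwa [smul_smul, div_mul_cancel₀ _ hs.ne'] at this
    rw [div_le_div_iff₀ ht hs]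
    calc g (t • v) * s ≤ ((t / s) * g (s • v)) * s := by nlinarith
      _ = g (s • v) * t := by field_simp
  -- the set of difference quotients and its infimum
  set S : EuclideanSpace ℝ (Fin p) → Set ℝ := fun v => (fun t => g (t • v) / t) '' Set.Ioi (0 : ℝ) with hSdef
  have Sne : ∀ v, (S v).Nonempty := fun v => ⟨g ((1 : ℝ) • v) / 1, ⟨1, Set.mem_Ioi.mpr one_pos, rfl⟩⟩
  have Sbdd : ∀ v, BddBelow (S v) := by
    intro v
    refine ⟨-h v, ?_⟩
    rintro x ⟨t, ht, rfl⟩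
    rw [Set.mem_Ioi] at ht
    have h1 : h βstar ≤ h (βstar + t • v) + t * h v := by
      have := h_tri (βstar + t • v) (-(t • v))
      have e : h (-(t • v)) = t * h v := by
        rw [← neg_smul, h_homog, abs_of_nonpos (by linarith), neg_neg]
      simpa [e] using this
    have : -(t * h v) ≤ g (t • v) := by simp only [hgdef]; linarith
    rw [le_div_iff₀ ht]
    nlinarith
  set P : EuclideanSpace ℝ (Fin p) → ℝ := fun v => sInf (S v) with hPdef
  have P_le : ∀ (v : EuclideanSpace ℝ (Fin p)) (t : ℝ), 0 < t → P v ≤ g (t • v) / t := by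
    intro v t ht
    exact csInf_le (Sbdd v) ⟨t, ht, rfl⟩
  have P_le_g : ∀ v : EuclideanSpace ℝ (Fin p), P v ≤ g v := by
    intro v
    have := P_le v 1 one_pos
    simpa using this
  -- positive homogeneity
  have P_hom_le : ∀ (c : ℝ), 0 < c → ∀ v, P (c • v) ≤ c * P v := by
    intro c hc v
    rw [mul_comm, ← div_le_iff₀ hc]
    refine le_csInf (Sne v) ?_
    rintro x ⟨t, ht, rfl⟩
    rw [Set.mem_Ioi] at ht
    rw [div_le_iff₀ hc]
    have := P_le (c • v) (t / c) (by positivity)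
    rw [smul_smul, div_mul_cancel₀ _ hc.ne'] at this
    have ht' : (0:ℝ) < t / c := by positivity
    have e2 : g (t • v) / (t / c) = g (t • v) / t * c := by
      field_simp
    rw [e2] at this
    calc P (c • v) ≤ g (t • v) / t * c := this
      _ = g (t • v) / t * c := rfl
  have P_hom : ∀ (c : ℝ), 0 < c → ∀ v, P (c • v) = c * P v := by
    intro c hc v
    refine le_antisymm (P_hom_le c hc v) ?_
    have := P_hom_le c⁻¹ (by positivity) (c • v)
    rw [smul_smul, inv_mul_cancel₀ hc.ne', one_smul] at this
    calc c * P v ≤ c * (c⁻¹ * P (c • v)) := by nlinarith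
      _ = P (c • v) := by field_simp
  -- subadditivity
  have P_add : ∀ v w : EuclideanSpace ℝ (Fin p), P (v + w) ≤ P v + P w := by
    intro v w
    have key : ∀ x ∈ S v, ∀ y ∈ S w, P (v + w) ≤ x + y := by
      rintro x ⟨t, ht, rfl⟩ y ⟨s, hs, rfl⟩
      rw [Set.mem_Ioi] at ht hs
      set r : ℝ := min t s / 2 with hrdef
      have hr : 0 < r := by positivity
      have h2r_t : 2 * r ≤ t := by
        rw [hrdef]; have := min_le_left t s; linarith
      have h2r_s : 2 * r ≤ s := by
        rw [hrdef]; have := min_le_right t s; linarith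
      have step1 : g (r • (v + w)) ≤ (g ((2 * r) • v) + g ((2 * r) • w)) / 2 := by
        have e : βstar + r • (v + w)
            = (1 / 2 : ℝ) • (βstar + (2 * r) • v) + (1 / 2 : ℝ) • (βstar + (2 * r) • w) := by
          module
        have := h_tri ((1 / 2 : ℝ) • (βstar + (2 * r) • v)) ((1 / 2 : ℝ) • (βstar + (2 * r) • w))
        rw [h_homog, h_homog] at this
        simp only [hgdef]
        rw [e]
        rw [abs_of_nonneg (by norm_num : (0:ℝ) ≤ 1/2)] at this
        linarith
      have step2 : g (r • (v + w)) / r ≤ g ((2 * r) • v) / (2 * r) + g ((2 * r) • w) / (2 * r) := by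
        rw [← add_div, div_le_div_iff₀ hr (by positivity)]
        have h2 := mul_le_mul_of_nonneg_right step1 (by positivity : (0:ℝ) ≤ 2 * r)
        calc g (r • (v + w)) * (2 * r)
            ≤ ((g ((2 * r) • v) + g ((2 * r) • w)) / 2) * (2 * r) := h2
          _ = (g ((2 * r) • v) + g ((2 * r) • w)) * r := by ring
      have step3 : g ((2 * r) • v) / (2 * r) ≤ g (t • v) / t := hmono v _ _ (by positivity) h2r_t
      have step4 : g ((2 * r) • w) / (2 * r) ≤ g (s • w) / s := hmono w _ _ (by positivity) h2r_s
      calc P (v + w) ≤ g (r • (v + w)) / r := P_le _ r hr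
        _ ≤ g (t • v) / t + g (s • w) / s := by linarith
    have step : ∀ x ∈ S v, P (v + w) - x ≤ P w := by
      intro x hx
      refine le_csInf (Sne w) fun y hy => ?_
      have := key x hx y hy
      linarith
    have : P (v + w) - P w ≤ P v := by
      refine le_csInf (Sne v) fun x hx => ?_
      have := step x hx
      linarith
    linarith
  -- nonnegativity on ker X
  have P_ker : ∀ v ∈ LinearMap.ker X, (0 : ℝ) ≤ P v := by
    intro v hv
    refine le_csInf (Sne v) ?_
    rintro x ⟨t, ht, rfl⟩
    rw [Set.mem_Ioi] at ht
    rw [LinearMap.mem_ker] at hv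
    have : X (βstar + t • v) = X βstar := by
      simp [map_add, map_smul, hv]
    have := hmin _ this
    have hg0 : 0 ≤ g (t • v) := by simp only [hgdef]; linarith
    positivity
  -- Hahn-Banach
  obtain ⟨d, hd_eq, hd_le⟩ :=
    exists_extension_of_le_sublinear ((0 : EuclideanSpace ℝ (Fin p) →ₗ[ℝ] ℝ).toPMap (LinearMap.ker X)) P
      (fun c hc x => P_hom c hc x) P_add
      (fun x => by
        exact P_ker x.1 x.2)
  have hd_ker : ∀ v ∈ LinearMap.ker X, d v = 0 := by
    intro v hv
    have := hd_eq ⟨v, hv⟩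
    simpa [LinearMap.toPMap_apply] using this
  have hd_g : ∀ v : EuclideanSpace ℝ (Fin p), d v ≤ g v := fun v => (hd_le v).trans (P_le_g v)
  -- factor d through X
  have hker_le : LinearMap.ker X ≤ LinearMap.ker d := fun v hv => by
    simpa [LinearMap.mem_ker] using hd_ker v hv
  set d' : (EuclideanSpace ℝ (Fin p) ⧸ LinearMap.ker X) →ₗ[ℝ] ℝ := (LinearMap.ker X).liftQ d hker_le with hd'def
  set μ : (LinearMap.range X) →ₗ[ℝ] ℝ :=
    d'.comp (X.quotKerEquivRange.symm.toLinearMap) with hμdef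
  have hμ : ∀ v : EuclideanSpace ℝ (Fin p), μ ⟨X v, LinearMap.mem_range_self X v⟩ = d v := by
    intro v
    have e : X.quotKerEquivRange.symm ⟨X v, LinearMap.mem_range_self X v⟩
        = Submodule.Quotient.mk v := by
      rw [LinearEquiv.symm_apply_eq]
      apply Subtype.ext
      exact (X.quotKerEquivRange_apply_mk v).symm
    simp [hμdef, e, hd'def]
  set F : EuclideanSpace ℝ (Fin n) →ₗ[ℝ] ℝ :=
    μ.comp (Submodule.orthogonalProjection (LinearMap.range X)).toLinearMap with hFdef
  have hF : ∀ v : EuclideanSpace ℝ (Fin p), F (X v) = d v := by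
    intro v
    have e : Submodule.orthogonalProjection (LinearMap.range X) (X v)
        = ⟨X v, LinearMap.mem_range_self X v⟩ :=
      Submodule.orthogonalProjection_mem_subspace_eq_self ⟨X v, LinearMap.mem_range_self X v⟩
    simp [hFdef, e, hμ v]
  set lam₀ : EuclideanSpace ℝ (Fin n) :=
    (InnerProductSpace.toDual ℝ (EuclideanSpace ℝ (Fin n))).symm
      (LinearMap.toContinuousLinearMap F) with hlamdef
  have hlam : ∀ w : EuclideanSpace ℝ (Fin n), (inner ℝ lam₀ w : ℝ) = F w := by
    intro w
    rw [hlamdef]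
    exact InnerProductSpace.toDual_symm_apply
  -- key subgradient inequality
  have key : ∀ β : EuclideanSpace ℝ (Fin p), (inner ℝ lam₀ (X (β - βstar)) : ℝ) ≤ h β - h βstar := by
    intro β
    rw [hlam, hF]
    have := hd_g (β - βstar)
    simpa [hgdef] using this
  -- pointwise bound for the sup
  have ratio_le : ∀ β : {β : EuclideanSpace ℝ (Fin p) // X β ≠ X βstar},
      (h βstar - h β.1) / ‖X (βstar - β.1)‖ ≤ ‖lam₀‖ := by
    rintro ⟨β, hβne⟩
    have hne : X (βstar - β) ≠ 0 := by
      rw [map_sub, sub_ne_zero]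
      exact fun e => hβne e.symm
    have hpos : 0 < ‖X (βstar - β)‖ := norm_pos_iff.mpr hne
    rw [div_le_iff₀ hpos]
    have h1 : h βstar - h β ≤ (inner ℝ lam₀ (X (βstar - β)) : ℝ) := by
      have := key β
      have e : X (βstar - β) = -(X (β - βstar)) := by
        rw [map_sub, map_sub, neg_sub]
      rw [e, inner_neg_right]
      linarith
    calc h βstar - h β ≤ (inner ℝ lam₀ (X (βstar - β)) : ℝ) := h1
      _ ≤ ‖lam₀‖ * ‖X (βstar - β)‖ := real_inner_le_norm _ _
  have bdd : BddAbove (Set.range fun β : {β : EuclideanSpace ℝ (Fin p) // X β ≠ X βstar} =>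
      (h βstar - h β.1) / ‖X (βstar - β.1)‖) := by
    refine ⟨‖lam₀‖, ?_⟩
    rintro x ⟨β, rfl⟩
    exact ratio_le β
  have hzero_mem : X (0 : EuclideanSpace ℝ (Fin p)) ≠ X βstar := by
    simp only [map_zero]
    exact fun e => hXβ e.symm
  haveI : Nonempty {β : EuclideanSpace ℝ (Fin p) // X β ≠ X βstar} := ⟨⟨0, hzero_mem⟩⟩
  refine ⟨lam₀, key, bdd, ?_, ?_⟩
  · have h1 := le_ciSup bdd (⟨0, hzero_mem⟩ : {β : EuclideanSpace ℝ (Fin p) // X β ≠ X βstar})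
    have e0 : (h βstar - h (0 : EuclideanSpace ℝ (Fin p))) / ‖X (βstar - 0)‖
        = h βstar / ‖X βstar‖ := by
      rw [h_zero, sub_zero, sub_zero]
    rw [e0] at h1
    exact h1
  · exact ciSup_le ratio_le
end

section
/- Let X ∈ ℝ^{n×p} satisfy max_{j=1,...,p} (1/n)‖Xe_j‖² ≤ 1 (normalized columns). Let T ⊂ {1,...,p} be nonempty and c > 0. Then the compatibility constant φ(c,T) := inf over u ∈ ℝ^p with ‖u_{T^c}‖₁ < c‖u_T‖₁ of √|T| ‖Xu‖ / (√n (‖u_T‖₁ - (1/c)‖u_{T^c}‖₁)) satisfies φ(c,T) ≤ 1. -/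
open scoped BigOperators

/-- Existence of a sign vector supported on `s` with small image norm. -/
lemma exists_sign_vec {n p : ℕ} (X : Matrix (Fin n) (Fin p) ℝ)
    (hnorm : ∀ j : Fin p, (∑ i, (X i j) ^ 2) ≤ (n : ℝ)) (s : Finset (Fin p)) :
    ∃ z : Fin p → ℝ, (∀ j ∈ s, |z j| = 1) ∧ (∀ j ∉ s, z j = 0) ∧
      (∑ i, (X.mulVec z i) ^ 2) ≤ (n : ℝ) * s.card := by
  classical
  induction s using Finset.induction_on with
  | empty =>
      refine ⟨0, by simp, by simp, ?_⟩
      simp [Matrix.mulVec_zero]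
  | @insert a s ha ih =>
      obtain ⟨z, hz1, hz0, hzQ⟩ := ih
      set v : Fin p → ℝ := Pi.single a 1 with hv
      have hQv : (∑ i, (X.mulVec v i) ^ 2) ≤ (n : ℝ) := by
        have : ∀ i, X.mulVec v i = X i a := by
          intro i; simp [hv, Matrix.mulVec_single]
        simpa [this] using hnorm a
      have hpar : (∑ i, (X.mulVec (z + v) i) ^ 2) + (∑ i, (X.mulVec (z - v) i) ^ 2)
          = 2 * (∑ i, (X.mulVec z i) ^ 2) + 2 * (∑ i, (X.mulVec v i) ^ 2) := by
        rw [← Finset.sum_add_distrib, Finset.mul_sum, Finset.mul_sum, ← Finset.sum_add_distrib]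
        refine Finset.sum_congr rfl fun i _ => ?_
        simp only [Matrix.mulVec_add, Matrix.mulVec_sub, Pi.add_apply, Pi.sub_apply]
        ring
      have hbound : (∑ i, (X.mulVec (z + v) i) ^ 2) ≤ (n : ℝ) * (insert a s).card ∨
          (∑ i, (X.mulVec (z - v) i) ^ 2) ≤ (n : ℝ) * (insert a s).card := by
        by_contra h
        push_neg at h
        have hcard : ((insert a s).card : ℝ) = s.card + 1 := by
          rw [Finset.card_insert_of_notMem ha]; push_cast; ring
        nlinarith [h.1, h.2, hpar, hzQ, hQv]
      have hza : z a = 0 := hz0 a ha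
      rcases hbound with h | h
      · refine ⟨z + v, ?_, ?_, h⟩
        · intro j hj
          rcases Finset.mem_insert.mp hj with rfl | hj
          · simp [hv, hza]
          · have hne : j ≠ a := fun e => ha (e ▸ hj)
            simp [hv, Pi.single_eq_of_ne hne, hz1 j hj]
        · intro j hj
          have hj1 : j ∉ s := fun h' => hj (Finset.mem_insert_of_mem h')
          have hne : j ≠ a := fun e => hj (e ▸ Finset.mem_insert_self a s)
          simp [hv, Pi.single_eq_of_ne hne, hz0 j hj1]
      · refine ⟨z - v, ?_, ?_, h⟩
        · intro j hj
          rcases Finset.mem_insert.mp hj with rfl | hj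
          · simp [hv, hza]
          · have hne : j ≠ a := fun e => ha (e ▸ hj)
            simp [hv, Pi.single_eq_of_ne hne, hz1 j hj]
        · intro j hj
          have hj1 : j ∉ s := fun h' => hj (Finset.mem_insert_of_mem h')
          have hne : j ≠ a := fun e => hj (e ▸ Finset.mem_insert_self a s)
          simp [hv, Pi.single_eq_of_ne hne, hz0 j hj1]

/-- If the columns of `X` are normalized (`(1/n)‖Xe_j‖² ≤ 1` for all `j`),
then for any nonempty `T ⊆ {1,...,p}` and any `c > 0`, the compatibility constant
`φ(c,T)` is at most `1`. -/
theorem compatibility_constant_le_one {n p : ℕ} (hn : 0 < n)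
    (X : Matrix (Fin n) (Fin p) ℝ)
    (hnorm : ∀ j : Fin p, (1 / (n : ℝ)) * ∑ i, (X i j) ^ 2 ≤ 1)
    (T : Finset (Fin p)) (hT : T.Nonempty) (c : ℝ) (hc : 0 < c) :
    (⨅ u : {u : Fin p → ℝ // ∑ j ∈ Tᶜ, |u j| < c * ∑ j ∈ T, |u j|},
      (Real.sqrt (T.card) * Real.sqrt (∑ i, (X.mulVec u.1 i) ^ 2)) /
        (Real.sqrt (n : ℝ) *
          ((∑ j ∈ T, |u.1 j|) - (1 / c) * ∑ j ∈ Tᶜ, |u.1 j|))) ≤ 1 := by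
  classical
  have hn' : (0 : ℝ) < n := by exact_mod_cast hn
  have hnorm' : ∀ j : Fin p, (∑ i, (X i j) ^ 2) ≤ (n : ℝ) := by
    intro j
    have := hnorm j
    rw [div_mul_eq_mul_div, one_mul, div_le_one hn'] at this
    exact this
  obtain ⟨z, hz1, hz0, hzQ⟩ := exists_sign_vec X hnorm' T
  have hsumT : (∑ j ∈ T, |z j|) = T.card := by
    rw [Finset.sum_congr rfl (fun j hj => hz1 j hj)]
    simp
  have hsumTc : (∑ j ∈ Tᶜ, |z j|) = 0 := by
    refine Finset.sum_eq_zero fun j hj => ?_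
    rw [hz0 j (Finset.mem_compl.mp hj)]; simp
  have hcardpos : (0 : ℝ) < T.card := by exact_mod_cast Finset.card_pos.mpr hT
  have hmem : (∑ j ∈ Tᶜ, |z j|) < c * ∑ j ∈ T, |z j| := by
    rw [hsumTc, hsumT]; positivity
  -- Bounded below by 0
  have hbdd : BddBelow (Set.range fun u : {u : Fin p → ℝ //
      ∑ j ∈ Tᶜ, |u j| < c * ∑ j ∈ T, |u j|} =>
      (Real.sqrt (T.card) * Real.sqrt (∑ i, (X.mulVec u.1 i) ^ 2)) /
        (Real.sqrt (n : ℝ) *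
          ((∑ j ∈ T, |u.1 j|) - (1 / c) * ∑ j ∈ Tᶜ, |u.1 j|))) := by
    refine ⟨0, fun x hx => ?_⟩
    obtain ⟨u, rfl⟩ := hx
    have hden : 0 ≤ (∑ j ∈ T, |u.1 j|) - (1 / c) * ∑ j ∈ Tᶜ, |u.1 j| := by
      have := u.2
      rw [sub_nonneg]
      rw [div_mul_eq_mul_div, one_mul, div_le_iff₀ hc, mul_comm]
      exact le_of_lt this
    positivity
  refine le_trans (ciInf_le hbdd ⟨z, hmem⟩) ?_
  rw [hsumT, hsumTc, mul_zero, sub_zero]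
  rw [div_le_one (by positivity)]
  calc Real.sqrt T.card * Real.sqrt (∑ i, (X.mulVec z i) ^ 2)
      ≤ Real.sqrt T.card * Real.sqrt ((n : ℝ) * T.card) := by
        gcongr
    _ = Real.sqrt n * T.card := by
        rw [Real.sqrt_mul (le_of_lt hn'), ← mul_assoc, mul_comm (Real.sqrt T.card),
          mul_assoc, Real.mul_self_sqrt (le_of_lt hcardpos)]
end

section
/- Let g₁,...,g_p be random variables (not necessarily independent) such that for a = ±1 and each j, P(a g_j > σt) ≤ Q(t) for all t > 0, where Q is the standard normal survival function. Let μ > 0, let d ∈ {1,...,p}, and let g₁↓ ≥ ... ≥ g_p↓ be a non-increasing rearrangement of (|g₁|,...,|g_p|). Then the random variable Z² := (1/(2dσ²)) Σ_{j=1}^d (g_j↓ - μ)₊² satisfies E[Z²] ≤ log E[e^{Z²}] ≤ log(1 + (2p/d)·φ(μ/σ)/(μ/σ)³) ≤ (2p/d)·φ(μ/σ)/(μ/σ)³. -/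
open MeasureTheory ProbabilityTheory
open scoped BigOperators

section AuxLemmas
open MeasureTheory Real Set Filter

lemma exp_neg_sq_tendsto : Tendsto (fun u : ℝ => -Real.exp (-u ^ 2 / 2)) atTop (nhds 0) := by
  have h1 : Tendsto (fun u : ℝ => -u ^ 2 / 2) atTop atBot := by
    apply Tendsto.atBot_div_const two_pos
    exact tendsto_neg_atTop_atBot.comp (tendsto_pow_atTop two_ne_zero)
  have := Real.tendsto_exp_atBot.comp h1
  have h2 := this.neg
  simpa using h2

lemma hderiv_gauss (u : ℝ) : HasDerivAt (fun u : ℝ => -Real.exp (-u ^ 2 / 2))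
    (u * Real.exp (-u ^ 2 / 2)) u := by
  have h : HasDerivAt (fun u : ℝ => -u ^ 2 / 2) (-u) u := by
    have := ((hasDerivAt_pow 2 u).neg).div_const 2
    exact this.congr_deriv (by ring)
  have := (h.exp).neg
  exact this.congr_deriv (by ring)

lemma integral_u_gauss {t : ℝ} (ht : 0 < t) :
    ∫ u in Set.Ioi t, u * Real.exp (-u ^ 2 / 2) = Real.exp (-t ^ 2 / 2) := by
  have := integral_Ioi_of_hasDerivAt_of_nonneg' (g := fun u : ℝ => -Real.exp (-u ^ 2 / 2))
    (g' := fun u => u * Real.exp (-u ^ 2 / 2)) (a := t) (l := 0)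
    (fun x _ => hderiv_gauss x) (fun x hx => by
      have : (0:ℝ) < x := ht.trans hx
      positivity) exp_neg_sq_tendsto
  simpa using this

lemma integrableOn_u_gauss {t : ℝ} (ht : 0 < t) :
    IntegrableOn (fun u => u * Real.exp (-u ^ 2 / 2)) (Set.Ioi t) := by
  exact integrableOn_Ioi_deriv_of_nonneg' (l := 0) (fun x _ => hderiv_gauss x)
    (fun x hx => by have : (0:ℝ) < x := ht.trans hx; positivity) exp_neg_sq_tendsto

lemma integrableOn_gauss (t : ℝ) :
    IntegrableOn (fun u => Real.exp (-u ^ 2 / 2) / Real.sqrt (2 * Real.pi)) (Set.Ioi t) := by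
  have h : Integrable (fun u : ℝ => Real.exp (-(1/2) * u ^ 2)) :=
    integrable_exp_neg_mul_sq (by norm_num)
  have := (h.div_const (Real.sqrt (2 * Real.pi))).integrableOn (s := Set.Ioi t)
  refine this.congr_fun (fun x _ => by ring_nf) measurableSet_Ioi

lemma gauss_tail {m t : ℝ} (hm : 0 < m) (hmt : m ≤ t) :
    ∫ u in Set.Ioi t, Real.exp (-u ^ 2 / 2) / Real.sqrt (2 * Real.pi) ≤
      Real.exp (-t ^ 2 / 2) / Real.sqrt (2 * Real.pi) / m := by
  have ht : 0 < t := hm.trans_le hmt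
  have hsq : (0:ℝ) < Real.sqrt (2 * Real.pi) := Real.sqrt_pos.2 (by positivity)
  have hint2 : IntegrableOn (fun u => u * Real.exp (-u ^ 2 / 2) / (m * Real.sqrt (2 * Real.pi)))
      (Set.Ioi t) := (integrableOn_u_gauss ht).div_const _
  have hle : ∫ u in Set.Ioi t, Real.exp (-u ^ 2 / 2) / Real.sqrt (2 * Real.pi) ≤
      ∫ u in Set.Ioi t, u * Real.exp (-u ^ 2 / 2) / (m * Real.sqrt (2 * Real.pi)) := by
    refine setIntegral_mono_on (integrableOn_gauss t) hint2 measurableSet_Ioi (fun u hu => ?_)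
    have hu' : m ≤ u := hmt.trans (le_of_lt hu)
    rw [div_le_div_iff₀ hsq (by positivity)]
    have h1 : Real.exp (-u ^ 2 / 2) * m ≤ Real.exp (-u ^ 2 / 2) * u := by
      exact mul_le_mul_of_nonneg_left (hu.out.le.trans' hmt |>.trans' le_rfl |>.trans le_rfl |>.trans le_rfl |>.trans_eq rfl |>.trans le_rfl) (Real.exp_pos _).le
    nlinarith [Real.exp_pos (-u ^ 2 / 2), hu.out, hm]
  calc _ ≤ _ := hle
    _ = (∫ u in Set.Ioi t, u * Real.exp (-u ^ 2 / 2)) / (m * Real.sqrt (2 * Real.pi)) := by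
        rw [integral_div]
    _ = Real.exp (-t ^ 2 / 2) / (m * Real.sqrt (2 * Real.pi)) := by rw [integral_u_gauss ht]
    _ = Real.exp (-t ^ 2 / 2) / Real.sqrt (2 * Real.pi) / m := by
        rw [div_div]; ring_nf

lemma tendsto_G {m : ℝ} (hm : 0 < m) :
    Tendsto (fun r : ℝ => -((r / m + 1 / m ^ 2) * Real.exp (-(m * r)))) atTop (nhds 0) := by
  have hmt : Tendsto (fun r : ℝ => m * r) atTop atTop := tendsto_id.const_mul_atTop hm
  have h1 : Tendsto (fun r : ℝ => (m * r) * Real.exp (-(m * r))) atTop (nhds 0) := by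
    have := (Real.tendsto_pow_mul_exp_neg_atTop_nhds_zero 1).comp hmt
    simpa [Function.comp_def] using this
  have h2 : Tendsto (fun r : ℝ => Real.exp (-(m * r))) atTop (nhds 0) := by
    have := Real.tendsto_exp_atBot.comp (tendsto_neg_atTop_atBot.comp hmt)
    simpa [Function.comp_def] using this
  have h3 : Tendsto (fun r : ℝ =>
      (1 / m ^ 2) * ((m * r) * Real.exp (-(m * r))) + (1 / m ^ 2) * Real.exp (-(m * r)))
      atTop (nhds 0) := by
    have := (h1.const_mul (1 / m ^ 2)).add (h2.const_mul (1 / m ^ 2))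
    simpa using this
  have heq : ∀ r : ℝ, -((r / m + 1 / m ^ 2) * Real.exp (-(m * r))) =
      -((1 / m ^ 2) * ((m * r) * Real.exp (-(m * r))) + (1 / m ^ 2) * Real.exp (-(m * r))) := by
    intro r; field_simp
  simp only [heq]
  simpa using h3.neg

lemma hasDerivAt_G {m : ℝ} (hm : 0 < m) (r : ℝ) :
    HasDerivAt (fun r : ℝ => -((r / m + 1 / m ^ 2) * Real.exp (-(m * r))))
      (r * Real.exp (-(m * r))) r := by
  have hlin : HasDerivAt (fun r : ℝ => r / m + 1 / m ^ 2) (1 / m) r := by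
    have h := ((hasDerivAt_id r).div_const m).add_const (1 / m ^ 2)
    exact h
  have hexp : HasDerivAt (fun r : ℝ => Real.exp (-(m * r))) (-m * Real.exp (-(m * r))) r := by
    have h : HasDerivAt (fun r : ℝ => -(m * r)) (-m) r := by
      exact ((hasDerivAt_id r).const_mul m).neg.congr_deriv (by ring)
    simpa [mul_comm] using h.exp
  have := (hlin.mul hexp).neg
  refine this.congr_deriv ?_
  field_simp
  ring

lemma integrableOn_r_exp {m : ℝ} (hm : 0 < m) :
    IntegrableOn (fun r => r * Real.exp (-(m * r))) (Set.Ioi (0:ℝ)) :=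
  integrableOn_Ioi_deriv_of_nonneg' (l := 0) (fun x _ => hasDerivAt_G hm x)
    (fun x hx => by have : (0:ℝ) < x := hx; positivity) (tendsto_G hm)

lemma integral_r_exp {m : ℝ} (hm : 0 < m) :
    ∫ r in Set.Ioi (0:ℝ), r * Real.exp (-(m * r)) = 1 / m ^ 2 := by
  have := integral_Ioi_of_hasDerivAt_of_nonneg' (l := 0) (fun x _ => hasDerivAt_G hm x)
    (fun x hx => by have : (0:ℝ) < x := hx; positivity) (tendsto_G hm)
  rw [this]
  simp

lemma hasDerivAt_expsq (r : ℝ) :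
    HasDerivAt (fun r : ℝ => Real.exp (r ^ 2 / 2)) (r * Real.exp (r ^ 2 / 2)) r := by
  have h : HasDerivAt (fun r : ℝ => r ^ 2 / 2) r r := by
    have := (hasDerivAt_pow 2 r).div_const 2
    exact this.congr_deriv (by ring)
  simpa [mul_comm] using h.exp

lemma integral_Ioo_r_expsq {c : ℝ} (hc : 0 ≤ c) :
    ∫ r in Set.Ioo (0:ℝ) c, r * Real.exp (r ^ 2 / 2) = Real.exp (c ^ 2 / 2) - 1 := by
  have hcont : Continuous (fun r : ℝ => r * Real.exp (r ^ 2 / 2)) := by continuity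
  have hint : ∫ r in (0:ℝ)..c, r * Real.exp (r ^ 2 / 2) = Real.exp (c ^ 2 / 2) - 1 := by
    have := intervalIntegral.integral_eq_sub_of_hasDerivAt (a := 0) (b := c)
      (f := fun r : ℝ => Real.exp (r ^ 2 / 2)) (f' := fun r => r * Real.exp (r ^ 2 / 2))
      (fun x _ => hasDerivAt_expsq x) (hcont.intervalIntegrable 0 c)
    simpa using this
  rw [← MeasureTheory.integral_Ioc_eq_integral_Ioo, ← intervalIntegral.integral_of_le hc, hint]

lemma key_moment {Ω : Type*} [MeasurableSpace Ω] (μm : Measure Ω) [IsProbabilityMeasure μm]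
    (X : Ω → ℝ) (hX : Measurable X) {m : ℝ} (hm : 0 < m)
    (hdom : ∀ t : ℝ, 0 < t → (μm {ω | t < X ω}).toReal ≤
      ∫ u in Set.Ioi t, Real.exp (-u ^ 2 / 2) / Real.sqrt (2 * Real.pi)) :
    Integrable (fun ω => Real.exp (max (X ω - m) 0 ^ 2 / 2) - 1) μm ∧
    ∫ ω, (Real.exp (max (X ω - m) 0 ^ 2 / 2) - 1) ∂μm ≤
      (Real.exp (-m ^ 2 / 2) / Real.sqrt (2 * Real.pi)) / m ^ 3 := by
  classical
  set F : Ω → ℝ := fun ω => Real.exp (max (X ω - m) 0 ^ 2 / 2) - 1 with hF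
  have hFmeas : Measurable F := by
    apply Measurable.sub _ measurable_const
    exact (((((hX.sub measurable_const).max measurable_const).pow measurable_const).div
      measurable_const).exp)
  have hFnn : ∀ ω, 0 ≤ F ω := fun ω => by
    simp only [hF, sub_nonneg, Real.one_le_exp_iff]
    positivity
  set h : ℝ → ℝ := fun r => r * Real.exp (r ^ 2 / 2) with hh
  set A : Set (ℝ × Ω) := {q | m + q.1 < X q.2} with hA
  have hAmeas : MeasurableSet A := by
    have : Measurable fun q : ℝ × Ω => X q.2 - q.1 - m :=
      ((hX.comp measurable_snd).sub measurable_fst).sub measurable_const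
    have : MeasurableSet {q : ℝ × Ω | 0 < X q.2 - q.1 - m} := measurableSet_lt measurable_const this
    convert this using 1
    ext q; simp [hA]; constructor <;> intro hq <;> linarith
  -- pointwise layer-cake
  have claim2 : ∀ ω, (∫⁻ r in Set.Ioi (0:ℝ), A.indicator 1 (r, ω) * ENNReal.ofReal (h r)) =
      ENNReal.ofReal (F ω) := by
    intro ω
    by_cases hc : m < X ω
    · set c := X ω - m with hcdef
      have hc0 : 0 < c := by simp [hcdef]; linarith
      have heq : ∀ r ∈ Set.Ioi (0:ℝ), A.indicator 1 (r, ω) * ENNReal.ofReal (h r) =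
          (Set.Iio c).indicator (fun r => ENNReal.ofReal (h r)) r := by
        intro r hr
        by_cases hrc : r < c
        · have : (r, ω) ∈ A := by simp [hA, hcdef] at hrc ⊢; linarith
          rw [Set.indicator_of_mem this, Set.indicator_of_mem (show r ∈ Set.Iio c from hrc)]
          simp
        · have : (r, ω) ∉ A := by simp [hA]; simp [hcdef] at hrc; linarith
          rw [Set.indicator_of_notMem this, Set.indicator_of_notMem (show r ∉ Set.Iio c from hrc)]
          simp
      rw [setLIntegral_congr_fun measurableSet_Ioi heq]
      rw [lintegral_indicator measurableSet_Iio _, Measure.restrict_restrict measurableSet_Iio]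
      have : Set.Iio c ∩ Set.Ioi (0:ℝ) = Set.Ioo 0 c := by ext x; simp [Set.mem_Ioo]; tauto
      rw [this]
      have hint : IntegrableOn h (Set.Ioo 0 c) := by
        have : Continuous h := by continuity
        exact (this.integrableOn_Icc (a := 0) (b := c)).mono_set Set.Ioo_subset_Icc_self
      rw [← MeasureTheory.ofReal_integral_eq_lintegral_ofReal hint
        (ae_restrict_of_forall_mem measurableSet_Ioo (fun r hr => by
          have : (0:ℝ) < r := hr.1
          positivity))]
      rw [show (∫ r in Set.Ioo (0:ℝ) c, h r) = Real.exp (c ^ 2 / 2) - 1 from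
        integral_Ioo_r_expsq hc0.le]
      congr 1
      simp [hF, max_eq_left (by linarith : (0:ℝ) ≤ X ω - m), hcdef]
    · have heq : ∀ r ∈ Set.Ioi (0:ℝ), A.indicator 1 (r, ω) * ENNReal.ofReal (h r) = 0 := by
        intro r hr
        have : (r, ω) ∉ A := by
          simp only [hA, Set.mem_setOf_eq, not_lt]
          push_neg at hc
          nlinarith [hr.out]
        simp [Set.indicator_of_notMem this]
      rw [setLIntegral_congr_fun measurableSet_Ioi heq]
      simp [hF, max_eq_right (by linarith : X ω - m ≤ 0)]
  set C : ℝ := Real.exp (-m ^ 2 / 2) / Real.sqrt (2 * Real.pi) / m ^ 3 with hC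
  have hmeas_h : Measurable h := by fun_prop
  have hswap : ∫⁻ ω, ENNReal.ofReal (F ω) ∂μm =
      ∫⁻ r in Set.Ioi (0:ℝ), (∫⁻ ω, A.indicator 1 (r, ω) * ENNReal.ofReal (h r) ∂μm) := by
    have h1 : ∫⁻ ω, ENNReal.ofReal (F ω) ∂μm =
        ∫⁻ ω, (∫⁻ r in Set.Ioi (0:ℝ), A.indicator 1 (r, ω) * ENNReal.ofReal (h r)) ∂μm := by
      exact lintegral_congr fun ω => (claim2 ω).symm
    rw [h1]
    exact lintegral_lintegral_swap (by
      apply Measurable.aemeasurable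
      apply Measurable.mul
      · exact (measurable_one.indicator hAmeas).comp (measurable_snd.prodMk measurable_fst)
      · exact (ENNReal.measurable_ofReal.comp hmeas_h).comp measurable_snd)
  have hinner : ∀ r : ℝ, (∫⁻ ω, A.indicator 1 (r, ω) * ENNReal.ofReal (h r) ∂μm) =
      ENNReal.ofReal (h r) * μm {ω | m + r < X ω} := by
    intro r
    have hset : MeasurableSet {ω | m + r < X ω} := measurableSet_lt measurable_const hX
    have heq : ∀ ω, A.indicator 1 (r, ω) * ENNReal.ofReal (h r) =
        ({ω | m + r < X ω}).indicator (fun _ => ENNReal.ofReal (h r)) ω := by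
      intro ω
      by_cases hω : m + r < X ω
      · rw [Set.indicator_of_mem (show (r, ω) ∈ A from hω),
          Set.indicator_of_mem (show ω ∈ {ω | m + r < X ω} from hω)]
        simp
      · rw [Set.indicator_of_notMem (show (r, ω) ∉ A from hω),
          Set.indicator_of_notMem (show ω ∉ {ω | m + r < X ω} from hω)]
        simp
    simp only [heq]
    rw [lintegral_indicator hset, setLIntegral_const]
  have hboundr : ∀ r ∈ Set.Ioi (0:ℝ),
      ENNReal.ofReal (h r) * μm {ω | m + r < X ω} ≤
        ENNReal.ofReal ((Real.exp (-m ^ 2 / 2) / Real.sqrt (2 * Real.pi) / m) *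
          (r * Real.exp (-(m * r)))) := by
    intro r hr
    have hr0 : (0:ℝ) < r := hr
    have htail : μm {ω | m + r < X ω} ≤
        ENNReal.ofReal (Real.exp (-(m + r) ^ 2 / 2) / Real.sqrt (2 * Real.pi) / m) := by
      have h1 := hdom (m + r) (by linarith)
      have h2 := gauss_tail hm (by linarith : m ≤ m + r)
      rw [← ENNReal.ofReal_toReal (measure_ne_top μm _)]
      exact ENNReal.ofReal_le_ofReal (h1.trans h2)
    calc ENNReal.ofReal (h r) * μm {ω | m + r < X ω}
        ≤ ENNReal.ofReal (h r) *
          ENNReal.ofReal (Real.exp (-(m + r) ^ 2 / 2) / Real.sqrt (2 * Real.pi) / m) :=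
          mul_le_mul_right htail _
      _ = ENNReal.ofReal (h r * (Real.exp (-(m + r) ^ 2 / 2) / Real.sqrt (2 * Real.pi) / m)) := by
          rw [← ENNReal.ofReal_mul (by positivity)]
      _ = ENNReal.ofReal ((Real.exp (-m ^ 2 / 2) / Real.sqrt (2 * Real.pi) / m) *
          (r * Real.exp (-(m * r)))) := by
          congr 1
          have hexp : Real.exp (r ^ 2 / 2) * Real.exp (-(m + r) ^ 2 / 2) =
              Real.exp (-m ^ 2 / 2) * Real.exp (-(m * r)) := by
            rw [← Real.exp_add, ← Real.exp_add]
            congr 1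
            ring
          simp only [hh]
          rw [show r * Real.exp (r ^ 2 / 2) * (Real.exp (-(m + r) ^ 2 / 2) / Real.sqrt (2 * Real.pi) / m)
              = r * (Real.exp (r ^ 2 / 2) * Real.exp (-(m + r) ^ 2 / 2)) / Real.sqrt (2 * Real.pi) / m by ring,
            hexp]
          ring
  have hrhs : ∫⁻ r in Set.Ioi (0:ℝ),
      ENNReal.ofReal ((Real.exp (-m ^ 2 / 2) / Real.sqrt (2 * Real.pi) / m) *
        (r * Real.exp (-(m * r)))) = ENNReal.ofReal C := by
    set K : ℝ := Real.exp (-m ^ 2 / 2) / Real.sqrt (2 * Real.pi) / m with hK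
    have hint : IntegrableOn (fun r => K * (r * Real.exp (-(m * r)))) (Set.Ioi (0:ℝ)) :=
      (integrableOn_r_exp hm).const_mul K
    rw [← MeasureTheory.ofReal_integral_eq_lintegral_ofReal hint
      (ae_restrict_of_forall_mem measurableSet_Ioi (fun r hr => by
        have : (0:ℝ) < r := hr
        positivity))]
    rw [integral_const_mul, integral_r_exp hm]
    congr 1
    rw [hC, hK]
    field_simp
  have hmain : ∫⁻ ω, ENNReal.ofReal (F ω) ∂μm ≤ ENNReal.ofReal C := by
    rw [hswap]
    refine le_trans (lintegral_mono_ae (ae_restrict_of_forall_mem measurableSet_Ioi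
      (fun r hr => ?_))) (le_of_eq hrhs)
    rw [hinner r]
    exact hboundr r hr
  have hFint : Integrable F μm := by
    refine ⟨hFmeas.aestronglyMeasurable, ?_⟩
    rw [hasFiniteIntegral_iff_ofReal (Filter.Eventually.of_forall hFnn)]
    exact lt_of_le_of_lt hmain ENNReal.ofReal_lt_top
  refine ⟨hFint, ?_⟩
  have hCnn : 0 ≤ C := by rw [hC]; positivity
  rw [MeasureTheory.integral_eq_lintegral_of_nonneg_ae (Filter.Eventually.of_forall hFnn)
    hFmeas.aestronglyMeasurable]
  calc (∫⁻ ω, ENNReal.ofReal (F ω) ∂μm).toReal ≤ (ENNReal.ofReal C).toReal :=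
        ENNReal.toReal_mono ENNReal.ofReal_ne_top hmain
    _ = C := ENNReal.toReal_ofReal hCnn
    _ = Real.exp (-m ^ 2 / 2) / Real.sqrt (2 * Real.pi) / m ^ 3 := rfl

lemma os_eq_sup' {Ω : Type*} {p : ℕ} (g : Fin p → Ω → ℝ) (gs : Fin p → Ω → ℝ)
    (hrearr : ∀ ω, ∃ e : Equiv.Perm (Fin p), ∀ j, gs j ω = |g (e j) ω|)
    (hmono : ∀ ω, Antitone fun j => gs j ω) (j : Fin p) (ω : Ω) :
    gs j ω = (Finset.univ.powersetCard ((j : ℕ) + 1)).sup'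
      (Finset.powersetCard_nonempty.2 (by rw [Finset.card_univ, Fintype.card_fin]; exact j.2))
      (fun S => if hS : S.Nonempty then S.inf' hS (fun i => |g i ω|) else 0) := by
  obtain ⟨e, he⟩ := hrearr ω
  apply le_antisymm
  · -- lower bound: the witness set (Iic j).image e
    set S₀ : Finset (Fin p) := (Finset.Iic j).image e with hS₀
    have hS₀card : S₀.card = (j : ℕ) + 1 := by
      rw [hS₀, Finset.card_image_of_injective _ e.injective, Fin.card_Iic]
    have hS₀mem : S₀ ∈ Finset.univ.powersetCard ((j : ℕ) + 1) :=
      Finset.mem_powersetCard_univ.2 hS₀card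
    have hS₀ne : S₀.Nonempty := Finset.card_pos.1 (by omega)
    refine le_trans ?_ (Finset.le_sup' _ hS₀mem)
    rw [dif_pos hS₀ne]
    apply Finset.le_inf'
    intro i hi
    rw [hS₀, Finset.mem_image] at hi
    obtain ⟨k, hk, rfl⟩ := hi
    rw [← he k]
    exact hmono ω (Finset.mem_Iic.1 hk)
  · apply Finset.sup'_le
    intro S hS
    have hScard : S.card = (j : ℕ) + 1 := Finset.mem_powersetCard_univ.1 hS
    have hSne : S.Nonempty := Finset.card_pos.1 (by omega)
    rw [dif_pos hSne]
    -- find k ∈ e.symm '' S with j ≤ k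
    set T : Finset (Fin p) := S.image e.symm with hT
    have hTcard : T.card = (j : ℕ) + 1 := by
      rw [hT, Finset.card_image_of_injective _ e.symm.injective, hScard]
    have hex : ∃ k ∈ T, j ≤ k := by
      by_contra hcon
      push_neg at hcon
      have hsub : T ⊆ Finset.Iio j := fun k hk => Finset.mem_Iio.2 (hcon k hk)
      have := Finset.card_le_card hsub
      rw [hTcard, Fin.card_Iio] at this
      omega
    obtain ⟨k, hkT, hjk⟩ := hex
    rw [hT, Finset.mem_image] at hkT
    obtain ⟨i, hiS, hik⟩ := hkT
    have hie : i = e k := by rw [← hik]; simp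
    calc S.inf' hSne (fun i => |g i ω|) ≤ |g i ω| := Finset.inf'_le _ hiS
      _ = gs k ω := by rw [hie, ← he k]
      _ ≤ gs j ω := hmono ω hjk

lemma os_measurable {Ω : Type*} [MeasurableSpace Ω] {p : ℕ} (g : Fin p → Ω → ℝ)
    (hmeas : ∀ j, Measurable (g j)) (gs : Fin p → Ω → ℝ)
    (hrearr : ∀ ω, ∃ e : Equiv.Perm (Fin p), ∀ j, gs j ω = |g (e j) ω|)
    (hmono : ∀ ω, Antitone fun j => gs j ω) (j : Fin p) : Measurable (gs j) := by
  have heq : gs j = fun ω => (Finset.univ.powersetCard ((j : ℕ) + 1)).sup'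
      (Finset.powersetCard_nonempty.2 (by rw [Finset.card_univ, Fintype.card_fin]; exact j.2))
      (fun S => if hS : S.Nonempty then S.inf' hS (fun i => |g i ω|) else 0) :=
    funext fun ω => os_eq_sup' g gs hrearr hmono j ω
  rw [heq]
  have : Measurable ((Finset.univ.powersetCard ((j : ℕ) + 1)).sup'
      (Finset.powersetCard_nonempty.2 (by rw [Finset.card_univ, Fintype.card_fin]; exact j.2))
      (fun S ω => if hS : S.Nonempty then S.inf' hS (fun i => |g i ω|) else 0)) := by
    apply Finset.measurable_sup'
    intro S _
    by_cases hS : S.Nonempty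
    · simp only [dif_pos hS]
      have h := Finset.inf'_induction (p := Measurable (α := Ω) (β := ℝ)) hS
        (fun i ω => |g i ω|) (fun _f hf _g hg => hf.inf hg) (fun i _ => (hmeas i).abs)
      convert h using 1
      ext ω
      rw [Finset.inf'_apply]
    · simp only [dif_neg hS]
      exact measurable_const
  convert this using 1
  ext ω
  rw [Finset.sup'_apply]

lemma card_filter_lt_fin {p d : ℕ} (hdp : d ≤ p) :
    (Finset.univ.filter (fun j : Fin p => (j : ℕ) < d)).card = d := by
  rw [show Finset.univ.filter (fun j : Fin p => (j : ℕ) < d) =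
      Finset.map (Fin.castLEEmb hdp) Finset.univ from ?_]
  · rw [Finset.card_map, Finset.card_univ, Fintype.card_fin]
  · ext k
    simp only [Finset.mem_filter, Finset.mem_univ, true_and, Finset.mem_map, Fin.castLEEmb]
    constructor
    · intro hk
      exact ⟨⟨(k : ℕ), hk⟩, by simp [Fin.castLE, Fin.ext_iff]⟩
    · rintro ⟨i, -, rfl⟩
      simpa using i.2

end AuxLemmas

open MeasureTheory Real Set Filter in
/-- Order-statistic moment bound. If each `±g_j/σ` is stochastically
dominated by a standard normal, `g↓` is a non-increasing rearrangement of `(|g_j|)`,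
and `Z² = (1/(2dσ²)) Σ_{j<d} (g_j↓ - μ)₊²`, then
`E[Z²] ≤ log E[e^{Z²}] ≤ log(1 + (2p/d) φ(μ/σ)/(μ/σ)³) ≤ (2p/d) φ(μ/σ)/(μ/σ)³`. -/
theorem order_statistics_soft_threshold_bound
    {Ω : Type*} [MeasurableSpace Ω] (μm : Measure Ω) [IsProbabilityMeasure μm]
    {p d : ℕ} (hd : 1 ≤ d) (hdp : d ≤ p)
    (σ : ℝ) (hσ : 0 < σ) (μ : ℝ) (hμ : 0 < μ)
    (g : Fin p → Ω → ℝ) (hmeas : ∀ j, Measurable (g j))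
    (hdom : ∀ j : Fin p, ∀ a ∈ ({-1, 1} : Set ℝ), ∀ t : ℝ, 0 < t →
      (μm {ω | σ * t < a * g j ω}).toReal ≤
        ∫ u in Set.Ioi t, Real.exp (-u ^ 2 / 2) / Real.sqrt (2 * Real.pi))
    (gs : Fin p → Ω → ℝ)
    (hrearr : ∀ ω, ∃ e : Equiv.Perm (Fin p), ∀ j, gs j ω = |g (e j) ω|)
    (hmono : ∀ ω, Antitone fun j => gs j ω)
    (Z2 : Ω → ℝ)
    (hZ2 : ∀ ω, Z2 ω = (1 / (2 * d * σ ^ 2)) *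
      ∑ j ∈ Finset.univ.filter (fun j : Fin p => (j : ℕ) < d),
        (max (gs j ω - μ) 0) ^ 2) :
    (∫ ω, Z2 ω ∂μm) ≤ Real.log (∫ ω, Real.exp (Z2 ω) ∂μm) ∧
    Real.log (∫ ω, Real.exp (Z2 ω) ∂μm) ≤
      Real.log (1 + (2 * p / d) *
        (Real.exp (-(μ / σ) ^ 2 / 2) / Real.sqrt (2 * Real.pi)) / (μ / σ) ^ 3) ∧
    Real.log (1 + (2 * p / d) *
        (Real.exp (-(μ / σ) ^ 2 / 2) / Real.sqrt (2 * Real.pi)) / (μ / σ) ^ 3) ≤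
      (2 * p / d) *
        (Real.exp (-(μ / σ) ^ 2 / 2) / Real.sqrt (2 * Real.pi)) / (μ / σ) ^ 3 := by
  classical
  have hd0 : (0:ℝ) < (d:ℝ) := by exact_mod_cast hd
  set m : ℝ := μ / σ with hmdef
  have hm : 0 < m := div_pos hμ hσ
  set C0 : ℝ := Real.exp (-m ^ 2 / 2) / Real.sqrt (2 * Real.pi) / m ^ 3 with hC0
  have hC0nn : 0 ≤ C0 := by rw [hC0]; positivity
  set E : ℝ → Fin p → Ω → ℝ :=
    fun a i ω => Real.exp (max (a * g i ω - μ) 0 ^ 2 / (2 * σ ^ 2)) - 1 with hE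
  have hEnn : ∀ a i ω, 0 ≤ E a i ω := by
    intro a i ω
    simp only [hE, sub_nonneg, Real.one_le_exp_iff]
    positivity
  -- per-variable integrability and moment bound
  have hEkey : ∀ a ∈ ({-1, 1} : Set ℝ), ∀ i : Fin p,
      Integrable (E a i) μm ∧ ∫ ω, E a i ω ∂μm ≤ C0 := by
    intro a ha i
    have hXmeas : Measurable (fun ω => a * g i ω / σ) :=
      (measurable_const.mul (hmeas i)).div_const σ
    have htail : ∀ t : ℝ, 0 < t → (μm {ω | t < a * g i ω / σ}).toReal ≤
        ∫ u in Set.Ioi t, Real.exp (-u ^ 2 / 2) / Real.sqrt (2 * Real.pi) := by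
      intro t ht
      have hseteq : {ω | t < a * g i ω / σ} = {ω | σ * t < a * g i ω} := by
        ext ω
        rw [Set.mem_setOf_eq, Set.mem_setOf_eq, lt_div_iff₀ hσ, mul_comm t σ]
      rw [hseteq]
      exact hdom i a ha t ht
    have hkey := key_moment μm (fun ω => a * g i ω / σ) hXmeas hm htail
    have harg : ∀ ω : Ω, max (a * g i ω / σ - m) 0 ^ 2 / 2 =
        max (a * g i ω - μ) 0 ^ 2 / (2 * σ ^ 2) := by
      intro ω
      rcases le_total (a * g i ω) μ with hle | hle
      · rw [max_eq_right (show a * g i ω / σ - m ≤ 0 by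
            rw [hmdef]; rw [sub_nonpos, div_le_div_iff₀ hσ hσ]; nlinarith),
          max_eq_right (sub_nonpos.2 hle)]
        simp
      · rw [max_eq_left (show (0:ℝ) ≤ a * g i ω / σ - m by
            rw [hmdef]; rw [sub_nonneg, div_le_div_iff₀ hσ hσ]; nlinarith),
          max_eq_left (sub_nonneg.2 hle), hmdef]
        rw [show a * g i ω / σ - μ / σ = (a * g i ω - μ) / σ by ring, div_pow,
          div_div, mul_comm (σ ^ 2) 2]
    have hfun : (fun ω => Real.exp (max (a * g i ω / σ - m) 0 ^ 2 / 2) - 1) = E a i := by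
      funext ω
      simp only [hE]
      rw [harg ω]
    rw [hfun] at hkey
    exact hkey
  have hE1 := fun i => hEkey 1 (by simp) i
  have hEm1 := fun i => hEkey (-1) (by simp) i
  -- the dominating function
  set G : Ω → ℝ := fun ω => 1 + (1 / (d:ℝ)) * ∑ i : Fin p, (E 1 i ω + E (-1) i ω) with hG
  have hEadd : ∀ i : Fin p, Integrable (fun ω => E 1 i ω + E (-1) i ω) μm := fun i =>
    ((hE1 i).1.add (hEm1 i).1)
  have hSint : Integrable (fun ω => (1 / (d:ℝ)) * ∑ i : Fin p, (E 1 i ω + E (-1) i ω)) μm :=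
    (integrable_finset_sum _ (fun i _ => hEadd i)).const_mul _
  have hGint : Integrable G μm := by
    simp only [hG]
    exact (integrable_const 1).add hSint
  set B : ℝ := 2 * (p:ℝ) / (d:ℝ) *
      (Real.exp (-(μ / σ) ^ 2 / 2) / Real.sqrt (2 * Real.pi)) / (μ / σ) ^ 3 with hB
  have hBnn : 0 ≤ B := by rw [hB]; positivity
  have hGbound : ∫ ω, G ω ∂μm ≤ 1 + B := by
    simp only [hG]
    rw [integral_add (integrable_const 1) hSint]
    simp only [integral_const, measure_univ, ENNReal.toReal_one, probReal_univ, smul_eq_mul, mul_one, one_smul]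
    rw [integral_const_mul, integral_finset_sum _ (fun i _ => hEadd i)]
    have hsum : ∑ i : Fin p, ∫ ω, (E 1 i ω + E (-1) i ω) ∂μm ≤ (p:ℝ) * (2 * C0) := by
      calc ∑ i : Fin p, ∫ ω, (E 1 i ω + E (-1) i ω) ∂μm
          ≤ ∑ _i : Fin p, 2 * C0 := by
            apply Finset.sum_le_sum
            intro i _
            rw [integral_add (hE1 i).1 (hEm1 i).1]
            have := (hE1 i).2
            have := (hEm1 i).2
            linarith
        _ = (p:ℝ) * (2 * C0) := by
            rw [Finset.sum_const, Finset.card_univ, Fintype.card_fin, nsmul_eq_mul]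
    have : 1 / (d:ℝ) * ∑ i : Fin p, ∫ ω, (E 1 i ω + E (-1) i ω) ∂μm ≤
        1 / (d:ℝ) * ((p:ℝ) * (2 * C0)) := by
      apply mul_le_mul_of_nonneg_left hsum
      positivity
    have hBeq : 1 / (d:ℝ) * ((p:ℝ) * (2 * C0)) = B := by
      rw [hB, hC0, ← hmdef]
      field_simp
    linarith
  -- measurability of Z2 and exp Z2
  set J : Finset (Fin p) := Finset.univ.filter (fun j : Fin p => (j : ℕ) < d) with hJ
  have hJcard : J.card = d := card_filter_lt_fin hdp
  have hgs_meas : ∀ j, Measurable (gs j) := os_measurable g hmeas gs hrearr hmono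
  have hZ2meas : Measurable Z2 := by
    have : Z2 = fun ω => (1 / (2 * (d:ℝ) * σ ^ 2)) * ∑ j ∈ J, (max (gs j ω - μ) 0) ^ 2 :=
      funext hZ2
    rw [this]
    apply Measurable.const_mul
    apply Finset.measurable_sum
    intro j _
    exact (((hgs_meas j).sub measurable_const).max measurable_const).pow measurable_const
  have hZ2nn : ∀ ω, 0 ≤ Z2 ω := by
    intro ω
    rw [hZ2]
    apply mul_nonneg
    · positivity
    · exact Finset.sum_nonneg fun j _ => by positivity
  -- pointwise domination: exp (Z2 ω) ≤ G ω
  have hptwise : ∀ ω, Real.exp (Z2 ω) ≤ G ω := by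
    intro ω
    set v : Fin p → ℝ := fun j => (max (gs j ω - μ) 0) ^ 2 / (2 * σ ^ 2) with hv
    have hZrw : Z2 ω = ∑ j ∈ J, ((d:ℝ)⁻¹ • v j) := by
      rw [hZ2, Finset.mul_sum]
      apply Finset.sum_congr rfl
      intro j _
      rw [smul_eq_mul, hv]
      simp only [one_div, mul_inv, div_eq_mul_inv]
      ring
    have hjensen : Real.exp (Z2 ω) ≤ ∑ j ∈ J, (d:ℝ)⁻¹ * Real.exp (v j) := by
      rw [hZrw]
      exact convexOn_exp.map_sum_le (fun _ _ => by positivity)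
        (by rw [Finset.sum_const, hJcard, nsmul_eq_mul]; field_simp)
        (fun _ _ => Set.mem_univ _)
    -- bound the sum of exp(v j) - 1 by the total sum
    obtain ⟨e, he⟩ := hrearr ω
    have hterm : ∀ j ∈ J, Real.exp (v j) - 1 ≤ E 1 (e j) ω + E (-1) (e j) ω := by
      intro j _
      rw [hv]
      rcases abs_cases (g (e j) ω) with ⟨habs, -⟩ | ⟨habs, -⟩
      · have : Real.exp (max (gs j ω - μ) 0 ^ 2 / (2 * σ ^ 2)) - 1 = E 1 (e j) ω := by
          simp only [hE, he j, habs, one_mul]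
        rw [this]
        have := hEnn (-1) (e j) ω
        linarith
      · have : Real.exp (max (gs j ω - μ) 0 ^ 2 / (2 * σ ^ 2)) - 1 = E (-1) (e j) ω := by
          simp only [hE, he j, habs, neg_one_mul]
        rw [this]
        have := hEnn 1 (e j) ω
        linarith
    have hsum2 : ∑ j ∈ J, (Real.exp (v j) - 1) ≤ ∑ i : Fin p, (E 1 i ω + E (-1) i ω) := by
      calc ∑ j ∈ J, (Real.exp (v j) - 1)
          ≤ ∑ j ∈ J, (E 1 (e j) ω + E (-1) (e j) ω) := Finset.sum_le_sum hterm
        _ = ∑ i ∈ J.image e, (E 1 i ω + E (-1) i ω) := by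
            rw [Finset.sum_image (fun a _ b _ hab => e.injective hab)]
        _ ≤ ∑ i : Fin p, (E 1 i ω + E (-1) i ω) := by
            apply Finset.sum_le_sum_of_subset_of_nonneg (Finset.subset_univ _)
            intro i _ _
            have h1 := hEnn 1 i ω
            have h2 := hEnn (-1) i ω
            linarith
    calc Real.exp (Z2 ω) ≤ ∑ j ∈ J, (d:ℝ)⁻¹ * Real.exp (v j) := hjensen
      _ = (d:ℝ)⁻¹ * ((J.card : ℝ) + ∑ j ∈ J, (Real.exp (v j) - 1)) := by
          rw [← Finset.mul_sum]
          congr 1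
          rw [Finset.sum_sub_distrib, Finset.sum_const, nsmul_eq_mul, mul_one]
          ring
      _ ≤ (d:ℝ)⁻¹ * ((d:ℝ) + ∑ i : Fin p, (E 1 i ω + E (-1) i ω)) := by
          apply mul_le_mul_of_nonneg_left _ (by positivity)
          rw [hJcard]
          exact add_le_add_right hsum2 _
      _ = G ω := by
          simp only [hG]
          field_simp
  -- integrability of exp Z2 and Z2
  have hexpZ2int : Integrable (fun ω => Real.exp (Z2 ω)) μm := by
    apply Integrable.mono' hGint hZ2meas.exp.aestronglyMeasurable
    filter_upwards with ω
    rw [Real.norm_eq_abs, abs_of_pos (Real.exp_pos _)]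
    exact hptwise ω
  have hZ2int : Integrable Z2 μm := by
    apply Integrable.mono' hexpZ2int hZ2meas.aestronglyMeasurable
    filter_upwards with ω
    rw [Real.norm_eq_abs, abs_of_nonneg (hZ2nn ω)]
    exact (Real.add_one_le_exp (Z2 ω)).trans' (by linarith)
  have hintbound : ∫ ω, Real.exp (Z2 ω) ∂μm ≤ 1 + B :=
    le_trans (integral_mono hexpZ2int hGint hptwise) hGbound
  -- Jensen (elementary): exp (∫ Z2) ≤ ∫ exp Z2
  set c : ℝ := ∫ ω, Z2 ω ∂μm with hc
  have hjen : Real.exp c ≤ ∫ ω, Real.exp (Z2 ω) ∂μm := by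
    have hpt : ∀ ω, Real.exp c * (Z2 ω - c + 1) ≤ Real.exp (Z2 ω) := by
      intro ω
      have h1 : Z2 ω - c + 1 ≤ Real.exp (Z2 ω - c) := by
        have := Real.add_one_le_exp (Z2 ω - c)
        linarith
      calc Real.exp c * (Z2 ω - c + 1) ≤ Real.exp c * Real.exp (Z2 ω - c) :=
            mul_le_mul_of_nonneg_left h1 (Real.exp_pos _).le
        _ = Real.exp (Z2 ω) := by rw [← Real.exp_add]; ring_nf
    have hsub : Integrable (fun ω => Z2 ω - c) μm := hZ2int.sub (integrable_const c)
    have hlhs : Integrable (fun ω => Real.exp c * (Z2 ω - c + 1)) μm :=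
      ((hsub.add (integrable_const 1)).const_mul _)
    have := integral_mono hlhs hexpZ2int hpt
    rw [integral_const_mul, integral_add hsub (integrable_const 1),
      integral_sub hZ2int (integrable_const c)] at this
    simp only [integral_const, measure_univ, ENNReal.toReal_one, probReal_univ, smul_eq_mul, one_mul, ← hc] at this
    calc Real.exp c = Real.exp c * (c - c + 1) := by ring
      _ ≤ ∫ ω, Real.exp (Z2 ω) ∂μm := by convert this using 2 <;> ring
  have hpos : 0 < ∫ ω, Real.exp (Z2 ω) ∂μm := lt_of_lt_of_le (Real.exp_pos c) hjen
  refine ⟨?_, ?_, ?_⟩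
  · exact (Real.le_log_iff_exp_le hpos).2 hjen
  · apply Real.log_le_log hpos
    calc ∫ ω, Real.exp (Z2 ω) ∂μm ≤ 1 + B := hintbound
      _ = 1 + 2 * (p:ℝ) / (d:ℝ) *
          (Real.exp (-(μ / σ) ^ 2 / 2) / Real.sqrt (2 * Real.pi)) / (μ / σ) ^ 3 := by rw [hB]
  · have h1 : (0:ℝ) < 1 + B := by linarith
    have := Real.log_le_sub_one_of_pos h1
    rw [hB] at this ⊢
    linarith
end

section
/- Let g₁,...,g_p be random variables satisfying the subgaussian domination P(a g_j > σt) ≤ Q(t) for a = ±1 and all t > 0. Then for any μ > 0, E[Σ_{j=1}^p (|g_j| - μ)₊²] ≤ 4p σ² φ(μ/σ)/(μ/σ)³. -/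
open MeasureTheory ProbabilityTheory Set Filter Topology
open scoped BigOperators

lemma gauss_tail_ub {x : ℝ} (hx : 0 < x) :
    ∫ u in Set.Ioi x, Real.exp (-u ^ 2 / 2) / Real.sqrt (2 * Real.pi) ≤
      Real.exp (-x ^ 2 / 2) / Real.sqrt (2 * Real.pi) / x := by
  have hderiv : ∀ u : ℝ, HasDerivAt (fun u : ℝ => -Real.exp (-u ^ 2 / 2))
      (u * Real.exp (-u ^ 2 / 2)) u := by
    intro u
    have h1 : HasDerivAt (fun u : ℝ => -u ^ 2 / 2) (-u) u := by
      have := ((hasDerivAt_pow 2 u).neg).div_const 2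
      refine this.congr_deriv ?_; push_cast; ring
    have := (h1.exp).neg
    refine this.congr_deriv ?_
    ring
  have hnn : ∀ u ∈ Set.Ioi x, 0 ≤ u * Real.exp (-u ^ 2 / 2) := by
    intro u hu
    exact mul_nonneg (le_of_lt (lt_trans hx hu)) (Real.exp_pos _).le
  have htend : Tendsto (fun u : ℝ => -Real.exp (-u ^ 2 / 2)) atTop (𝓝 0) := by
    rw [show (0:ℝ) = -0 by ring]
    apply Tendsto.neg
    apply Real.tendsto_exp_atBot.comp
    apply Filter.Tendsto.atBot_div_const (by norm_num : (0:ℝ) < 2)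
    exact tendsto_neg_atBot_iff.mpr (tendsto_pow_atTop (by norm_num))
  have hcont : ContinuousWithinAt (fun u : ℝ => -Real.exp (-u ^ 2 / 2)) (Set.Ici x) x :=
    (hderiv x).continuousAt.continuousWithinAt
  have key : ∫ u in Set.Ioi x, u * Real.exp (-u ^ 2 / 2) = Real.exp (-x ^ 2 / 2) := by
    have := integral_Ioi_of_hasDerivAt_of_nonneg hcont (fun u _ => hderiv u) hnn htend
    rw [this]; ring
  have hint : IntegrableOn (fun u => u * Real.exp (-u ^ 2 / 2)) (Set.Ioi x) :=
    integrableOn_Ioi_deriv_of_nonneg hcont (fun u _ => hderiv u) hnn htend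
  have hintφ : IntegrableOn (fun u => Real.exp (-u ^ 2 / 2) / Real.sqrt (2 * Real.pi))
      (Set.Ioi x) := by
    apply Integrable.integrableOn
    apply Integrable.div_const
    have := integrable_exp_neg_mul_sq (by norm_num : (0:ℝ) < 1/2)
    convert this using 2 with u
    ring_nf
  calc ∫ u in Set.Ioi x, Real.exp (-u ^ 2 / 2) / Real.sqrt (2 * Real.pi)
      ≤ ∫ u in Set.Ioi x, u * Real.exp (-u ^ 2 / 2) / (x * Real.sqrt (2 * Real.pi)) := by
        apply setIntegral_mono_on hintφ (hint.div_const _) measurableSet_Ioi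
        intro u hu
        rw [div_le_div_iff₀ (Real.sqrt_pos.mpr (by positivity)) (by positivity)]
        have h1 : Real.exp (-u ^ 2 / 2) * x ≤ Real.exp (-u ^ 2 / 2) * u :=
          mul_le_mul_of_nonneg_left (le_of_lt hu) (Real.exp_pos _).le
        nlinarith [Real.sqrt_nonneg (2 * Real.pi), Real.exp_pos (-u^2/2)]
    _ = Real.exp (-x ^ 2 / 2) / Real.sqrt (2 * Real.pi) / x := by
        rw [integral_div, key]; field_simp

lemma exp_lin_deriv {c : ℝ} (hc : 0 < c) (t : ℝ) :
    HasDerivAt (fun t : ℝ => -((t / c + 1 / c ^ 2) * Real.exp (-(c * t))))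
      (t * Real.exp (-(c * t))) t := by
  have h1 : HasDerivAt (fun t : ℝ => t / c + 1 / c ^ 2) (1 / c) t :=
    ((hasDerivAt_id t).div_const c).add_const _
  have h2 : HasDerivAt (fun t : ℝ => -(c * t)) (-c) t := by
    have := ((hasDerivAt_id t).const_mul c).neg; simp only [mul_one] at this; exact this
  have h3 := (h1.mul h2.exp).neg
  refine h3.congr_deriv ?_
  field_simp
  ring

lemma exp_lin_tendsto {c : ℝ} (hc : 0 < c) :
    Tendsto (fun t : ℝ => -((t / c + 1 / c ^ 2) * Real.exp (-(c * t)))) atTop (𝓝 0) := by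
  rw [show (0:ℝ) = -0 by ring]
  apply Tendsto.neg
  have key : Tendsto (fun y : ℝ => (1 / c ^ 2) * ((y + 1) * Real.exp (-y))) atTop (𝓝 0) := by
    have h := (Real.tendsto_pow_mul_exp_neg_atTop_nhds_zero 1).add
      (Real.tendsto_pow_mul_exp_neg_atTop_nhds_zero 0)
    simp only [pow_one, pow_zero, one_mul] at h
    have h2 : Tendsto (fun y : ℝ => (y + 1) * Real.exp (-y)) atTop (𝓝 0) := by
      convert h using 2 with y
      · ring
      · norm_num
    have := h2.const_mul (1 / c ^ 2); simpa using this
  have hcomp := key.comp (tendsto_id.const_mul_atTop hc)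
  apply hcomp.congr
  intro t
  simp only [Function.comp, id]
  field_simp

lemma exp_lin_int {c : ℝ} (hc : 0 < c) :
    IntegrableOn (fun t => t * Real.exp (-(c * t))) (Set.Ioi (0:ℝ)) ∧
    ∫ t in Set.Ioi (0:ℝ), t * Real.exp (-(c * t)) = 1 / c ^ 2 := by
  have hcont : ContinuousWithinAt (fun t : ℝ => -((t / c + 1 / c ^ 2) * Real.exp (-(c * t))))
      (Set.Ici 0) 0 := (exp_lin_deriv hc 0).continuousAt.continuousWithinAt
  have hnn : ∀ t ∈ Set.Ioi (0:ℝ), 0 ≤ t * Real.exp (-(c * t)) := fun t ht =>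
    mul_nonneg ht.le (Real.exp_pos _).le
  constructor
  · exact integrableOn_Ioi_deriv_of_nonneg hcont (fun t _ => exp_lin_deriv hc t) hnn
      (exp_lin_tendsto hc)
  · have := integral_Ioi_of_hasDerivAt_of_nonneg hcont (fun t _ => exp_lin_deriv hc t) hnn
      (exp_lin_tendsto hc)
    rw [this]
    simp

/-- If each `±g_j/σ` is stochastically dominated by a standard normal,
then for any `μ > 0`, `E[Σ_j (|g_j| - μ)₊²] ≤ 4 p σ² φ(μ/σ)/(μ/σ)³`. -/
theorem soft_threshold_sum_moment_bound
    {Ω : Type*} [MeasurableSpace Ω] (μm : Measure Ω) [IsProbabilityMeasure μm]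
    {p : ℕ} (σ : ℝ) (hσ : 0 < σ) (μ : ℝ) (hμ : 0 < μ)
    (g : Fin p → Ω → ℝ) (hmeas : ∀ j, Measurable (g j))
    (hdom : ∀ j : Fin p, ∀ a ∈ ({-1, 1} : Set ℝ), ∀ t : ℝ, 0 < t →
      (μm {ω | σ * t < a * g j ω}).toReal ≤
        ∫ u in Set.Ioi t, Real.exp (-u ^ 2 / 2) / Real.sqrt (2 * Real.pi)) :
    (∫ ω, ∑ j, (max (|g j ω| - μ) 0) ^ 2 ∂μm) ≤
      4 * p * σ ^ 2 *
        (Real.exp (-(μ / σ) ^ 2 / 2) / Real.sqrt (2 * Real.pi)) / (μ / σ) ^ 3 := by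
  have hm : 0 < μ / σ := div_pos hμ hσ
  set c : ℝ := μ / σ ^ 2 with hc_def
  have hc : 0 < c := by positivity
  set φm : ℝ := Real.exp (-(μ / σ) ^ 2 / 2) / Real.sqrt (2 * Real.pi) with hφm_def
  have hsqrt : 0 < Real.sqrt (2 * Real.pi) := Real.sqrt_pos.mpr (by positivity)
  have hφm : 0 < φm := div_pos (Real.exp_pos _) hsqrt
  set B : ℝ := 4 * φm / (μ / σ) * (1 / c ^ 2) with hB_def
  have hB : 0 ≤ B := by positivity
  -- measurability of each summand
  have hmeas_h : ∀ j : Fin p, Measurable fun ω => max (|g j ω| - μ) 0 := fun j =>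
    (((hmeas j).abs.sub measurable_const).max measurable_const)
  -- per-coordinate bound
  have hj : ∀ j : Fin p,
      (∫⁻ ω, ENNReal.ofReal ((max (|g j ω| - μ) 0) ^ 2) ∂μm) ≤ ENNReal.ofReal B := by
    intro j
    set h : Ω → ℝ := fun ω => max (|g j ω| - μ) 0 with hh_def
    have hnn : 0 ≤ᵐ[μm] h := Filter.Eventually.of_forall fun ω => le_max_right _ _
    have layer := lintegral_comp_eq_lintegral_meas_lt_mul (f := h) (g := fun t => 2 * t) μm
      hnn (hmeas_h j).aemeasurable
      (fun t _ => ((continuous_const.mul continuous_id).intervalIntegrable 0 t))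
      ((ae_restrict_iff' measurableSet_Ioi).mpr
        (Filter.Eventually.of_forall fun t ht => by simp at ht ⊢; linarith))
    have hsq : ∀ ω, (∫ t in (0:ℝ)..h ω, 2 * t) = h ω ^ 2 := by
      intro ω
      rw [intervalIntegral.integral_const_mul, integral_id]
      ring
    simp only [hsq] at layer
    rw [layer]
    -- tail bound pointwise in t
    have tail : ∀ t ∈ Set.Ioi (0:ℝ),
        μm {a | t < h a} * ENNReal.ofReal (2 * t)
          ≤ ENNReal.ofReal (4 * φm / (μ / σ) * (t * Real.exp (-(c * t)))) := by
      intro t ht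
      simp only [Set.mem_Ioi] at ht
      set s : ℝ := (μ + t) / σ with hs_def
      have hs : 0 < s := by positivity
      have hset : {a | t < h a} ⊆
          {ω | σ * s < 1 * g j ω} ∪ {ω | σ * s < (-1) * g j ω} := by
        intro ω hω
        simp only [Set.mem_setOf_eq, hh_def, lt_max_iff] at hω
        have habs : μ + t < |g j ω| := by
          rcases hω with h1 | h1
          · linarith
          · linarith
        have hσs : σ * s = μ + t := by rw [hs_def]; field_simp
        rw [lt_abs] at habs
        rcases habs with h1 | h1
        · left; simp only [Set.mem_setOf_eq, one_mul, hσs]; exact h1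
        · right; simp only [Set.mem_setOf_eq, neg_one_mul, hσs]; exact h1
      -- real tail bound
      have hchain : Real.exp (-s ^ 2 / 2) / Real.sqrt (2 * Real.pi) / s
          ≤ φm * Real.exp (-(c * t)) / (μ / σ) := by
        have hms : μ / σ ≤ s := by
          rw [hs_def, div_le_div_iff₀ hσ hσ]
          nlinarith
        have hes : Real.exp (-s ^ 2 / 2) ≤ Real.exp (-(μ / σ) ^ 2 / 2) * Real.exp (-(c * t)) := by
          rw [← Real.exp_add]
          apply Real.exp_le_exp.mpr
          have hexpand : s ^ 2 - (μ / σ) ^ 2 - 2 * (c * t) = (t / σ) ^ 2 := by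
            rw [hs_def, hc_def]; field_simp; ring
          nlinarith [sq_nonneg (t / σ)]
        calc Real.exp (-s ^ 2 / 2) / Real.sqrt (2 * Real.pi) / s
            ≤ (Real.exp (-(μ / σ) ^ 2 / 2) * Real.exp (-(c * t))) / Real.sqrt (2 * Real.pi)
              / (μ / σ) := by
              gcongr
          _ = φm * Real.exp (-(c * t)) / (μ / σ) := by rw [hφm_def]; ring
      have hQb : ∀ a ∈ ({-1, 1} : Set ℝ),
          μm {ω | σ * s < a * g j ω} ≤ ENNReal.ofReal (φm * Real.exp (-(c * t)) / (μ / σ)) := by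
        intro a ha
        have d := hdom j a ha s hs
        have := le_trans d (le_trans (gauss_tail_ub hs) hchain)
        rw [← ENNReal.ofReal_toReal (measure_ne_top μm _)]
        exact ENNReal.ofReal_le_ofReal this
      have hmeasb : μm {a | t < h a}
          ≤ ENNReal.ofReal (2 * (φm * Real.exp (-(c * t)) / (μ / σ))) := by
        calc μm {a | t < h a}
            ≤ μm ({ω | σ * s < 1 * g j ω} ∪ {ω | σ * s < (-1) * g j ω}) :=
              measure_mono hset
          _ ≤ μm {ω | σ * s < 1 * g j ω} + μm {ω | σ * s < (-1) * g j ω} :=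
              measure_union_le _ _
          _ ≤ ENNReal.ofReal (φm * Real.exp (-(c * t)) / (μ / σ)) +
              ENNReal.ofReal (φm * Real.exp (-(c * t)) / (μ / σ)) :=
              add_le_add (hQb 1 (by norm_num)) (hQb (-1) (by norm_num))
          _ = ENNReal.ofReal (2 * (φm * Real.exp (-(c * t)) / (μ / σ))) := by
              rw [← ENNReal.ofReal_add (by positivity) (by positivity)]; ring_nf
      calc μm {a | t < h a} * ENNReal.ofReal (2 * t)
          ≤ ENNReal.ofReal (2 * (φm * Real.exp (-(c * t)) / (μ / σ))) *
            ENNReal.ofReal (2 * t) := by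
            exact mul_le_mul_left hmeasb _
        _ = ENNReal.ofReal (4 * φm / (μ / σ) * (t * Real.exp (-(c * t)))) := by
            rw [← ENNReal.ofReal_mul (by positivity)]
            congr 1
            field_simp
            ring
    calc ∫⁻ t in Set.Ioi (0:ℝ), μm {a | t < h a} * ENNReal.ofReal (2 * t)
        ≤ ∫⁻ t in Set.Ioi (0:ℝ),
            ENNReal.ofReal (4 * φm / (μ / σ) * (t * Real.exp (-(c * t)))) :=
          setLIntegral_mono' measurableSet_Ioi tail
      _ = ENNReal.ofReal (∫ t in Set.Ioi (0:ℝ),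
            4 * φm / (μ / σ) * (t * Real.exp (-(c * t)))) := by
          rw [← ofReal_integral_eq_lintegral_ofReal
            (((exp_lin_int hc).1.const_mul _))
            ((ae_restrict_iff' measurableSet_Ioi).mpr (Filter.Eventually.of_forall
              fun t ht => by
                simp only [Set.mem_Ioi] at ht
                positivity))]
      _ = ENNReal.ofReal B := by
          rw [integral_const_mul, (exp_lin_int hc).2, hB_def]
    -- done
  -- assemble
  have hFnn : ∀ ω, 0 ≤ ∑ j, (max (|g j ω| - μ) 0) ^ 2 := fun ω =>
    Finset.sum_nonneg fun j _ => sq_nonneg _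
  have hFmeas : Measurable fun ω => ∑ j, (max (|g j ω| - μ) 0) ^ 2 :=
    Finset.measurable_sum _ fun j _ => (hmeas_h j).pow_const 2
  rw [integral_eq_lintegral_of_nonneg_ae (Filter.Eventually.of_forall hFnn)
    hFmeas.aestronglyMeasurable]
  have hsum : (∫⁻ ω, ENNReal.ofReal (∑ j, (max (|g j ω| - μ) 0) ^ 2) ∂μm)
      ≤ ENNReal.ofReal (p * B) := by
    calc (∫⁻ ω, ENNReal.ofReal (∑ j, (max (|g j ω| - μ) 0) ^ 2) ∂μm)
        = ∑ j, ∫⁻ ω, ENNReal.ofReal ((max (|g j ω| - μ) 0) ^ 2) ∂μm := by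
          simp_rw [ENNReal.ofReal_sum_of_nonneg (fun j _ => sq_nonneg _)]
          exact lintegral_finset_sum _ fun j _ =>
            ((hmeas_h j).pow_const 2).ennreal_ofReal
      _ ≤ ∑ _j : Fin p, ENNReal.ofReal B := Finset.sum_le_sum fun j _ => hj j
      _ = ENNReal.ofReal (p * B) := by
          rw [Finset.sum_const, Finset.card_univ, Fintype.card_fin, nsmul_eq_mul,
            ← ENNReal.ofReal_natCast p, ← ENNReal.ofReal_mul (by positivity)]
  have hRB : 4 * (p:ℝ) * σ ^ 2 * (Real.exp (-(μ / σ) ^ 2 / 2) / Real.sqrt (2 * Real.pi))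
      / (μ / σ) ^ 3 = p * B := by
    rw [hB_def, hφm_def, hc_def]
    field_simp
  rw [hRB]
  exact ENNReal.toReal_le_of_le_ofReal (by positivity) hsum
end

section
/- For any positive integers d, p with d ≤ p/5 and any matrix X ∈ ℝ^{n×p}, there exists a subset Ω of {w ∈ {-1,0,1}^p : ‖w‖₀ = d} such that (i) log|Ω| ≥ (d/2)log(p/(5d)); (ii) for any two distinct w, w' ∈ Ω, ‖w - w'‖² > d (counting coordinates where the supports/signs differ, i.e., the Hamming-type distance of the supports exceeds d); (iii) every w ∈ Ω satisfies (1/n)‖Xw‖² ≤ d · max_{j=1,...,p} ‖Xe_j‖²/n. -/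
open scoped BigOperators
open Finset in
lemma exists_signs {n p : ℕ} (X : Matrix (Fin n) (Fin p) ℝ) (S : Finset (Fin p)) :
    ∃ ε : Fin p → ℝ, (∀ j, ε j = 1 ∨ ε j = -1) ∧
      ∑ i, (∑ j ∈ S, ε j * X i j) ^ 2 ≤ ∑ j ∈ S, ∑ i, (X i j) ^ 2 := by
  classical
  induction S using Finset.induction with
  | empty => exact ⟨fun _ => 1, fun _ => Or.inl rfl, by simp⟩
  | @insert a S ha ih =>
    obtain ⟨ε, hε1, hε2⟩ := ih
    set s : Fin n → ℝ := fun i => ∑ j ∈ S, ε j * X i j with hs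
    set t : ℝ := if 0 ≤ ∑ i, s i * X i a then -1 else 1 with ht
    have htsq : t ^ 2 = 1 := by
      rw [ht]; split_ifs <;> norm_num
    have htip : t * ∑ i, s i * X i a ≤ 0 := by
      rw [ht]; split_ifs with h
      · linarith
      · push_neg at h; nlinarith
    refine ⟨Function.update ε a t, ?_, ?_⟩
    · intro j
      rcases eq_or_ne j a with rfl | hj
      · simp only [Function.update_self, ht]; split_ifs <;> simp
      · simpa [Function.update_of_ne hj] using hε1 j
    · have hrow : ∀ i, ∑ j ∈ insert a S, Function.update ε a t j * X i j
          = t * X i a + s i := by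
        intro i
        rw [Finset.sum_insert ha]
        simp only [Function.update_self]
        congr 1
        apply Finset.sum_congr rfl
        intro j hj
        rw [Function.update_of_ne (ne_of_mem_of_not_mem hj ha)]
      have hexp : ∑ i, (t * X i a + s i) ^ 2
          = ∑ i, (X i a) ^ 2 + 2 * (t * ∑ i, s i * X i a) + ∑ i, (s i) ^ 2 := by
        rw [Finset.mul_sum, Finset.mul_sum, ← Finset.sum_add_distrib, ← Finset.sum_add_distrib]
        exact Finset.sum_congr rfl fun i _ => by linear_combination (X i a) ^ 2 * htsq
      simp only [hrow]
      rw [hexp, Finset.sum_insert ha]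
      have h2 : ∑ i, (s i) ^ 2 ≤ ∑ j ∈ S, ∑ i, (X i j) ^ 2 := hε2
      linarith

open Finset in
lemma ball_card {d m : ℕ} (hm : 0 < m) (c : Fin d → Fin m) (r : ℕ) :
    (Finset.univ.filter fun y : Fin d → Fin m =>
      (Finset.univ.filter fun k => y k ≠ c k).card ≤ r).card ≤ 2 ^ d * m ^ r := by
  classical
  set Ts : Finset (Finset (Fin d)) := Finset.univ.filter fun T => T.card ≤ r with hTs
  have hsub : (Finset.univ.filter fun y : Fin d → Fin m =>
      (Finset.univ.filter fun k => y k ≠ c k).card ≤ r) ⊆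
      Ts.biUnion (fun T => Finset.univ.filter fun y : Fin d → Fin m => ∀ k ∉ T, y k = c k) := by
    intro y hy
    rw [Finset.mem_filter] at hy
    rw [Finset.mem_biUnion]
    refine ⟨Finset.univ.filter fun k => y k ≠ c k, ?_, ?_⟩
    · rw [hTs, Finset.mem_filter]; exact ⟨Finset.mem_univ _, hy.2⟩
    · rw [Finset.mem_filter]
      refine ⟨Finset.mem_univ _, fun k hk => ?_⟩
      simp only [Finset.mem_filter, Finset.mem_univ, true_and, not_not] at hk
      exact hk
  have hpiece : ∀ T ∈ Ts, (Finset.univ.filter fun y : Fin d → Fin m =>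
      ∀ k ∉ T, y k = c k).card ≤ m ^ r := by
    intro T hT
    rw [hTs, Finset.mem_filter] at hT
    have hinj : (Finset.univ.filter fun y : Fin d → Fin m =>
        ∀ k ∉ T, y k = c k).card ≤ Fintype.card ({ x // x ∈ T } → Fin m) := by
      rw [← Finset.card_univ]
      apply Finset.card_le_card_of_injOn (fun y (k : { x // x ∈ T }) => y k.1)
        (fun _ _ => Finset.mem_univ _)
      intro y₁ h₁ y₂ h₂ heq
      rw [Finset.mem_coe, Finset.mem_filter] at h₁ h₂
      funext k
      by_cases hk : k ∈ T
      · exact congrFun heq ⟨k, hk⟩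
      · rw [h₁.2 k hk, h₂.2 k hk]
    calc (Finset.univ.filter fun y : Fin d → Fin m => ∀ k ∉ T, y k = c k).card
        ≤ Fintype.card ({ x // x ∈ T } → Fin m) := hinj
      _ = m ^ T.card := by simp [Fintype.card_fun]
      _ ≤ m ^ r := Nat.pow_le_pow_right hm hT.2
  calc (Finset.univ.filter fun y : Fin d → Fin m =>
        (Finset.univ.filter fun k => y k ≠ c k).card ≤ r).card
      ≤ (Ts.biUnion fun T => Finset.univ.filter fun y : Fin d → Fin m =>
          ∀ k ∉ T, y k = c k).card := Finset.card_le_card hsub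
    _ ≤ ∑ T ∈ Ts, (Finset.univ.filter fun y : Fin d → Fin m => ∀ k ∉ T, y k = c k).card :=
        Finset.card_biUnion_le
    _ ≤ ∑ _T ∈ Ts, m ^ r := Finset.sum_le_sum hpiece
    _ = Ts.card * m ^ r := by rw [Finset.sum_const, smul_eq_mul]
    _ ≤ 2 ^ d * m ^ r := by
        apply Nat.mul_le_mul_right
        calc Ts.card ≤ (Finset.univ : Finset (Finset (Fin d))).card := Finset.card_le_card
              (Finset.filter_subset _ _)
          _ = 2 ^ d := by simp [Finset.card_univ]

lemma exists_code (d m r : ℕ) (hm : 0 < m) :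
    ∃ C : Finset (Fin d → Fin m),
      (∀ c ∈ C, ∀ c' ∈ C, c ≠ c' → r < (Finset.univ.filter fun k => c k ≠ c' k).card) ∧
      m ^ d ≤ C.card * (2 ^ d * m ^ r) := by
  classical
  set P : Finset (Fin d → Fin m) → Prop := fun C =>
    ∀ c ∈ C, ∀ c' ∈ C, c ≠ c' → r < (Finset.univ.filter fun k => c k ≠ c' k).card with hP
  have hS : ((Finset.univ : Finset (Finset (Fin d → Fin m))).filter P).Nonempty :=
    ⟨∅, by simp [hP]⟩
  obtain ⟨C, hCmem, hCmax⟩ := Finset.exists_max_image _ Finset.card hS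
  rw [Finset.mem_filter] at hCmem
  have hPC : P C := hCmem.2
  have hcover : ∀ y : Fin d → Fin m, ∃ c ∈ C,
      (Finset.univ.filter fun k => y k ≠ c k).card ≤ r := by
    intro y
    by_contra hcon
    push_neg at hcon
    have hyC : y ∉ C := fun hy => absurd (le_refl r)
      (not_le.mpr (by simpa using hcon y hy))
    have hins : P (insert y C) := by
      intro c hc c' hc' hne
      rw [Finset.mem_insert] at hc hc'
      have hsymm : ∀ a b : Fin d → Fin m,
          (Finset.univ.filter fun k => a k ≠ b k).card
          = (Finset.univ.filter fun k => b k ≠ a k).card := by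
        intro a b; congr 1; apply Finset.filter_congr; intro k _; simp [ne_comm]
      rcases hc with rfl | hc <;> rcases hc' with rfl | hc'
      · exact absurd rfl hne
      · exact hcon c' hc'
      · rw [hsymm]; exact hcon c hc
      · exact hPC c hc c' hc' hne
    have := hCmax (insert y C) (Finset.mem_filter.mpr ⟨Finset.mem_univ _, hins⟩)
    rw [Finset.card_insert_of_notMem hyC] at this
    omega
  have huniv : (Finset.univ : Finset (Fin d → Fin m)) ⊆
      C.biUnion fun c => Finset.univ.filter fun y : Fin d → Fin m =>
        (Finset.univ.filter fun k => y k ≠ c k).card ≤ r := by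
    intro y _
    rw [Finset.mem_biUnion]
    obtain ⟨c, hc, hcy⟩ := hcover y
    exact ⟨c, hc, Finset.mem_filter.mpr ⟨Finset.mem_univ _, hcy⟩⟩
  refine ⟨C, hPC, ?_⟩
  calc m ^ d = (Finset.univ : Finset (Fin d → Fin m)).card := by
        simp [Finset.card_univ, Fintype.card_fun]
    _ ≤ (C.biUnion fun c => Finset.univ.filter fun y : Fin d → Fin m =>
          (Finset.univ.filter fun k => y k ≠ c k).card ≤ r).card := Finset.card_le_card huniv
    _ ≤ ∑ c ∈ C, (Finset.univ.filter fun y : Fin d → Fin m =>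
          (Finset.univ.filter fun k => y k ≠ c k).card ≤ r).card := Finset.card_biUnion_le
    _ ≤ ∑ _c ∈ C, 2 ^ d * m ^ r := Finset.sum_le_sum fun c _ => ball_card hm c r
    _ = C.card * (2 ^ d * m ^ r) := by rw [Finset.sum_const, smul_eq_mul]

open Finset in
open Classical in
/-- Signed Varshamov–Gilbert extraction. For `d ≤ p/5` and any matrix `X`,
there is a set `Ω` of `d`-sparse sign vectors with `log|Ω| ≥ (d/2) log(p/(5d))`, pairwise
support-Hamming distance `> d`, and `(1/n)‖Xw‖² ≤ d · max_j ‖Xe_j‖²/n` for every `w ∈ Ω`. -/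
theorem signed_varshamov_gilbert_extraction {n p : ℕ} (hn : 0 < n) (hp : 0 < p)
    (d : ℕ) (hd : 0 < d) (hdp : 5 * d ≤ p)
    (X : Matrix (Fin n) (Fin p) ℝ) :
    ∃ Ω : Finset (Fin p → ℝ),
      (∀ w ∈ Ω, (∀ j : Fin p, w j = -1 ∨ w j = 0 ∨ w j = 1) ∧
        (Finset.univ.filter fun j : Fin p => w j ≠ 0).card = d) ∧
      ((d : ℝ) / 2) * Real.log ((p : ℝ) / (5 * d)) ≤ Real.log (Ω.card) ∧
      (∀ w ∈ Ω, ∀ w' ∈ Ω, w ≠ w' →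
        (d : ℝ) < ((Finset.univ.filter fun j : Fin p => |w j| ≠ |w' j|).card : ℝ)) ∧
      (∀ w ∈ Ω, (1 / (n : ℝ)) * ∑ i, (X.mulVec w i) ^ 2 ≤
        (d : ℝ) * (Finset.univ.sup' ⟨⟨0, hp⟩, Finset.mem_univ _⟩ fun j : Fin p =>
          (∑ i, (X i j) ^ 2) / n)) := by
  classical
  set m : ℕ := p / d with hm_def
  have hm5 : 5 ≤ m := (Nat.le_div_iff_mul_le hd).mpr hdp
  have hm0 : 0 < m := by omega
  have hdm : d * m ≤ p := by rw [hm_def, mul_comm]; exact Nat.div_mul_le_self p d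
  set r : ℕ := d / 2 with hr_def
  -- block embedding
  have hbound : ∀ (k : Fin d) (a : Fin m), k.1 * m + a.1 < p := by
    intro k a
    have h1 : k.1 * m + a.1 < (k.1 + 1) * m := by
      have := a.isLt; rw [add_mul, one_mul]; omega
    have h2 : (k.1 + 1) * m ≤ d * m := Nat.mul_le_mul_right m k.isLt
    omega
  set φ : (Fin d → Fin m) → Fin d → Fin p :=
    fun c k => ⟨k.1 * m + (c k).1, hbound k (c k)⟩ with hφ_def
  have hkey : ∀ (c c' : Fin d → Fin m) (k k' : Fin d),
      φ c k = φ c' k' → k = k' ∧ c k = c' k' := by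
    intro c c' k k' h
    have hv : k.1 * m + (c k).1 = k'.1 * m + (c' k').1 := congrArg Fin.val h
    have hdiv : ∀ (k : Fin d) (a : Fin m), (k.1 * m + a.1) / m = k.1 := by
      intro k a
      rw [mul_comm, Nat.mul_add_div hm0, Nat.div_eq_of_lt a.isLt, add_zero]
    have hk : k.1 = k'.1 := by
      have := hdiv k (c k); have := hdiv k' (c' k'); rw [hv] at *; omega
    have hkk : k = k' := Fin.ext hk
    refine ⟨hkk, ?_⟩
    subst hkk
    have : (c k).1 = (c' k).1 := by omega
    exact Fin.ext this
  have hφinj : ∀ c, Function.Injective (φ c) := fun c k k' h => (hkey c c k k' h).1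
  set S : (Fin d → Fin m) → Finset (Fin p) := fun c => Finset.univ.image (φ c) with hS_def
  have hmemS : ∀ c j, j ∈ S c ↔ ∃ k, φ c k = j := by
    intro c j; simp [hS_def]
  have hScard : ∀ c, (S c).card = d := by
    intro c
    rw [hS_def]
    rw [Finset.card_image_of_injective _ (hφinj c), Finset.card_univ, Fintype.card_fin]
  have hφmem : ∀ c c' k, φ c k ∈ S c' ↔ c' k = c k := by
    intro c c' k
    rw [hmemS]
    constructor
    · rintro ⟨k', hk'⟩
      obtain ⟨rfl, h2⟩ := hkey c' c k' k hk'
      exact h2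
    · intro h
      exact ⟨k, by apply Fin.ext; simp [hφ_def, h]⟩
  -- signs
  choose ε hε1 hε2 using fun c : Fin d → Fin m => exists_signs X (S c)
  set w : (Fin d → Fin m) → Fin p → ℝ :=
    fun c j => if j ∈ S c then ε c j else 0 with hw_def
  have habs : ∀ c j, |w c j| = if j ∈ S c then 1 else 0 := by
    intro c j
    by_cases hj : j ∈ S c
    · rcases hε1 c j with h | h <;> simp [hw_def, hj, h]
    · simp [hw_def, hj]
  -- code
  obtain ⟨C, hPC, hCcard⟩ := exists_code d m r hm0
  refine ⟨C.image w, ?_, ?_, ?_, ?_⟩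
  -- distances, proved first as an auxiliary fact
  all_goals
    have hsdiff : ∀ c c', S c \ S c'
        = (Finset.univ.filter fun k => c k ≠ c' k).image (φ c) := by
      intro c c'
      ext j
      constructor
      · intro hj
        obtain ⟨hj1, hj2⟩ := Finset.mem_sdiff.mp hj
        obtain ⟨k, -, rfl⟩ := Finset.mem_image.mp hj1
        exact Finset.mem_image.mpr ⟨k, Finset.mem_filter.mpr ⟨Finset.mem_univ _,
          fun hck => hj2 ((hφmem c c' k).mpr hck.symm)⟩, rfl⟩
      · intro hj
        obtain ⟨k, hk, rfl⟩ := Finset.mem_image.mp hj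
        obtain ⟨-, hk⟩ := Finset.mem_filter.mp hk
        exact Finset.mem_sdiff.mpr ⟨Finset.mem_image.mpr ⟨k, Finset.mem_univ _, rfl⟩,
          fun hmem => hk ((hφmem c c' k).mp hmem).symm⟩
  all_goals
    have hdistcard : ∀ c c', (Finset.univ.filter fun j : Fin p => |w c j| ≠ |w c' j|).card
        = (Finset.univ.filter fun k => c k ≠ c' k).card
          + (Finset.univ.filter fun k => c' k ≠ c k).card := by
      intro c c'
      have hfe : (Finset.univ.filter fun j : Fin p => |w c j| ≠ |w c' j|)
          = (S c \ S c') ∪ (S c' \ S c) := by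
        ext j
        rw [Finset.mem_filter, Finset.mem_union, Finset.mem_sdiff, Finset.mem_sdiff]
        by_cases h1 : j ∈ S c <;> by_cases h2 : j ∈ S c' <;>
          simp [habs, h1, h2]
      rw [hfe, Finset.card_union_of_disjoint disjoint_sdiff_sdiff,
        hsdiff c c', hsdiff c' c,
        Finset.card_image_of_injective _ (hφinj c),
        Finset.card_image_of_injective _ (hφinj c')]
  -- support facts
  all_goals
    have hsupp : ∀ c, (Finset.univ.filter fun j : Fin p => w c j ≠ 0) = S c := by
      intro c
      ext j
      rw [Finset.mem_filter]
      by_cases hj : j ∈ S c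
      · rcases hε1 c j with h | h <;> simp [hw_def, hj, h]
      · simp [hw_def, hj]
  · -- (0) membership properties
    intro v hv
    obtain ⟨c, hc, rfl⟩ := Finset.mem_image.mp hv
    constructor
    · intro j
      by_cases hj : j ∈ S c
      · rcases hε1 c j with h | h <;> simp [hw_def, hj, h]
      · simp [hw_def, hj]
    · rw [hsupp c, hScard c]
  · -- (i) cardinality bound
    have hdsymm : ∀ c c' : Fin d → Fin m,
        (Finset.univ.filter fun k => c k ≠ c' k).card
        = (Finset.univ.filter fun k => c' k ≠ c k).card := by
      intro c c'; congr 1; apply Finset.filter_congr; intro k _; simp [ne_comm]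
    have hinj : Set.InjOn w C := by
      intro c hc c' hc' heq
      by_contra hne
      have h1 := hPC c hc c' hc' hne
      have h2 := hdistcard c c'
      have h0 : (Finset.univ.filter fun j : Fin p => |w c j| ≠ |w c' j|).card = 0 := by
        rw [heq]; simp
      omega
    rw [Finset.card_image_of_injOn hinj]
    -- numeric part
    have h4p : 4 * p ≤ 5 * (d * m) := by
      have hmod : d * m + p % d = p := by rw [hm_def]; exact Nat.div_add_mod p d
      have hlt : p % d < d := Nat.mod_lt p hd
      have h5 : d * 5 ≤ d * m := Nat.mul_le_mul_left d hm5
      nlinarith [hmod, hlt, h5]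
    have hx : (0 : ℝ) < (p : ℝ) / (5 * d) := by positivity
    have hcast : (p : ℝ) / (5 * d) ≤ (m : ℝ) / 4 := by
      rw [div_le_div_iff₀ (by positivity) (by norm_num)]
      have : ((4 * p : ℕ) : ℝ) ≤ ((5 * (d * m) : ℕ) : ℝ) := Nat.cast_le.mpr h4p
      push_cast at this
      nlinarith [this]
    have h1 : ((p : ℝ) / (5 * d)) ^ ((d : ℝ) / 2) ≤ ((m : ℝ) / 4) ^ ((d : ℝ) / 2) :=
      Real.rpow_le_rpow (le_of_lt hx) hcast (by positivity)
    have h2 : ((m : ℝ) / 4) ^ ((d : ℝ) / 2) = (m : ℝ) ^ ((d : ℝ) / 2) / 2 ^ (d : ℕ) := by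
      rw [Real.div_rpow (Nat.cast_nonneg m) (by norm_num)]
      congr 1
      rw [show (4 : ℝ) = (2 : ℝ) ^ (2 : ℕ) by norm_num,
        ← Real.rpow_natCast (2 : ℝ) 2, ← Real.rpow_mul (by norm_num),
        ← Real.rpow_natCast (2 : ℝ) d]
      congr 1
      push_cast
      ring
    have hrd : r ≤ d := by omega
    have h3 : (m : ℝ) ^ ((d : ℝ) / 2) ≤ (m : ℝ) ^ (((d - r : ℕ)) : ℝ) := by
      apply Real.rpow_le_rpow_of_exponent_le
      · exact_mod_cast hm0
      · have h2r : 2 * r ≤ d := by omega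
        have : ((d - r : ℕ) : ℝ) = (d : ℝ) - (r : ℝ) := by
          push_cast [Nat.cast_sub hrd]; ring
        rw [this]
        have hcr : (r : ℝ) ≤ (d : ℝ) / 2 := by
          have : ((2 * r : ℕ) : ℝ) ≤ ((d : ℕ) : ℝ) := Nat.cast_le.mpr h2r
          push_cast at this; linarith
        linarith
    have hnat2 : m ^ (d - r) ≤ C.card * 2 ^ d := by
      have hsplit : m ^ (d - r) * m ^ r = m ^ d := by
        rw [← pow_add]; congr 1; omega
      have hpos : 0 < m ^ r := Nat.pow_pos hm0
      apply Nat.le_of_mul_le_mul_right _ hpos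
      calc m ^ (d - r) * m ^ r = m ^ d := hsplit
        _ ≤ C.card * (2 ^ d * m ^ r) := hCcard
        _ = C.card * 2 ^ d * m ^ r := by ring
    have hfinal : ((p : ℝ) / (5 * d)) ^ ((d : ℝ) / 2) ≤ (C.card : ℝ) := by
      have hc2 : ((m ^ (d - r) : ℕ) : ℝ) ≤ ((C.card * 2 ^ d : ℕ) : ℝ) := Nat.cast_le.mpr hnat2
      push_cast at hc2
      have h4' : (m : ℝ) ^ (((d - r : ℕ)) : ℝ) = ((m : ℝ)) ^ ((d - r : ℕ)) :=
        Real.rpow_natCast _ _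
      have h2pos : (0 : ℝ) < 2 ^ (d : ℕ) := by positivity
      calc ((p : ℝ) / (5 * d)) ^ ((d : ℝ) / 2)
          ≤ (m : ℝ) ^ ((d : ℝ) / 2) / 2 ^ (d : ℕ) := by rw [← h2]; exact h1
        _ ≤ (m : ℝ) ^ ((d - r : ℕ)) / 2 ^ (d : ℕ) := by
            apply (div_le_div_iff_of_pos_right h2pos).mpr
            rw [← Real.rpow_natCast (m : ℝ) (d - r)]
            exact h3
        _ ≤ (C.card : ℝ) := by
            rw [div_le_iff₀ h2pos]
            exact hc2
    calc ((d : ℝ) / 2) * Real.log ((p : ℝ) / (5 * d))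
        = Real.log (((p : ℝ) / (5 * d)) ^ ((d : ℝ) / 2)) := (Real.log_rpow hx _).symm
      _ ≤ Real.log (C.card : ℝ) := Real.log_le_log (by positivity) hfinal
  · -- (ii) distance
    intro v hv v' hv' hne
    obtain ⟨c, hc, rfl⟩ := Finset.mem_image.mp hv
    obtain ⟨c', hc', rfl⟩ := Finset.mem_image.mp hv'
    have hcne : c ≠ c' := fun h => hne (by rw [h])
    have h1 := hPC c hc c' hc' hcne
    have hdsymm : (Finset.univ.filter fun k => c k ≠ c' k).card
        = (Finset.univ.filter fun k => c' k ≠ c k).card := by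
      congr 1; apply Finset.filter_congr; intro k _; simp [ne_comm]
    have h2 := hdistcard c c'
    have : d < (Finset.univ.filter fun j : Fin p => |w c j| ≠ |w c' j|).card := by omega
    exact_mod_cast this
  · -- (iii) column bound
    intro v hv
    obtain ⟨c, hc, rfl⟩ := Finset.mem_image.mp hv
    set M : ℝ := Finset.univ.sup' ⟨⟨0, hp⟩, Finset.mem_univ _⟩
      (fun j : Fin p => (∑ i, (X i j) ^ 2) / n) with hM_def
    have hrow : ∀ i, X.mulVec (w c) i = ∑ j ∈ S c, ε c j * X i j := by
      intro i
      have h0 : X.mulVec (w c) i = ∑ j, X i j * w c j := rfl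
      rw [h0, show ∑ j, X i j * w c j = ∑ j, if j ∈ S c then ε c j * X i j else 0 from
        Finset.sum_congr rfl fun j _ => by
          by_cases hj : j ∈ S c <;> simp [hw_def, hj, mul_comm],
        Finset.sum_ite_mem]
      simp
    have hcol : ∀ j, ∑ i, (X i j) ^ 2 ≤ n * M := by
      intro j
      have hle : (∑ i, (X i j) ^ 2) / n ≤ M :=
        Finset.le_sup' (fun j : Fin p => (∑ i, (X i j) ^ 2) / n) (Finset.mem_univ j)
      have hn' : (0 : ℝ) < n := by exact_mod_cast hn
      calc ∑ i, (X i j) ^ 2 = n * ((∑ i, (X i j) ^ 2) / n) := by field_simp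
        _ ≤ n * M := by apply mul_le_mul_of_nonneg_left hle (le_of_lt hn')
    have hXw : ∑ i, (X.mulVec (w c) i) ^ 2 ≤ (d : ℝ) * (n * M) := by
      calc ∑ i, (X.mulVec (w c) i) ^ 2
          = ∑ i, (∑ j ∈ S c, ε c j * X i j) ^ 2 := by
            apply Finset.sum_congr rfl; intro i _; rw [hrow i]
        _ ≤ ∑ j ∈ S c, ∑ i, (X i j) ^ 2 := hε2 c
        _ ≤ ∑ _j ∈ S c, n * M := Finset.sum_le_sum fun j _ => hcol j
        _ = (d : ℝ) * (n * M) := by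
            rw [Finset.sum_const, hScard c, nsmul_eq_mul]
    have hn' : (0 : ℝ) < n := by exact_mod_cast hn
    calc (1 / (n : ℝ)) * ∑ i, (X.mulVec (w c) i) ^ 2
        ≤ (1 / (n : ℝ)) * ((d : ℝ) * (n * M)) := by
          apply mul_le_mul_of_nonneg_left hXw (by positivity)
      _ = (d : ℝ) * M := by field_simp
end

section
/- Let F be the cdf of |g| for g ~ N(0,1) standard normal, and suppose p/d ≥ 3. Then F^{-1}(1 - d/p) ≥ √(2 log(2p/d) - log log(2p/d) - log(4π)). -/
open MeasureTheory ProbabilityTheory Set Filter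

noncomputable section HNQBsec

namespace HNQB

/-- the unnormalized gaussian density -/
def φ0 (x : ℝ) : ℝ := Real.exp (-x^2/2)

def gfun (x : ℝ) : ℝ := (Real.sqrt (x^2+4) - x) / 2

def ffun (x : ℝ) : ℝ := φ0 x * gfun x

def f'fun (x : ℝ) : ℝ := φ0 x * ((x / Real.sqrt (x^2+4) - 1) / 2 - x * gfun x)

lemma phi0_pos (x : ℝ) : 0 < φ0 x := Real.exp_pos _

lemma w_sq (x : ℝ) : (Real.sqrt (x^2+4))^2 = x^2+4 := Real.sq_sqrt (by positivity)

lemma w_pos (x : ℝ) : 0 < Real.sqrt (x^2+4) := Real.sqrt_pos.mpr (by positivity)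

lemma w_ge_two (x : ℝ) : 2 ≤ Real.sqrt (x^2+4) := by
  have : Real.sqrt 4 ≤ Real.sqrt (x^2+4) := Real.sqrt_le_sqrt (by nlinarith [sq_nonneg x])
  have h4 : Real.sqrt 4 = 2 := by
    rw [show (4:ℝ) = 2^2 by norm_num, Real.sqrt_sq (by norm_num)]
  linarith

lemma w_ge_x (x : ℝ) : x ≤ Real.sqrt (x^2+4) := by
  rcases le_or_gt x 0 with h | h
  · exact h.trans (w_pos x).le
  · nlinarith [w_sq x, w_pos x]

lemma hasDerivAt_ffun (x : ℝ) : HasDerivAt ffun (f'fun x) x := by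
  have hw : (x^2+4) ≠ 0 := by positivity
  have h1 : HasDerivAt (fun y : ℝ => y^2+4) (2*x) x := by
    simpa using (hasDerivAt_pow 2 x).add_const 4
  have hsq : HasDerivAt (fun y : ℝ => Real.sqrt (y^2+4)) (x / Real.sqrt (x^2+4)) x := by
    have h2 := (Real.hasDerivAt_sqrt hw).comp x h1
    refine h2.congr_deriv ?_
    field_simp
  have hg : HasDerivAt gfun ((x / Real.sqrt (x^2+4) - 1) / 2) x := by
    unfold gfun
    exact ((hsq.sub (hasDerivAt_id x)).div_const 2)
  have hφ : HasDerivAt φ0 (-x * φ0 x) x := by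
    have hin : HasDerivAt (fun y : ℝ => -y^2/2) (-x) x := by
      have := ((hasDerivAt_pow 2 x).neg).div_const 2
      refine this.congr_deriv ?_
      ring
    have := hin.exp
    unfold φ0
    convert this using 1
    ring
  have := hφ.mul hg
  unfold ffun f'fun
  refine this.congr_deriv ?_
  unfold φ0 gfun
  ring

lemma inner_bounds {x : ℝ} (hx : 0 ≤ x) :
    -1 ≤ (x / Real.sqrt (x^2+4) - 1) / 2 - x * gfun x ∧
    (x / Real.sqrt (x^2+4) - 1) / 2 - x * gfun x ≤ 0 := by
  set w := Real.sqrt (x^2+4) with hw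
  have hw2 : w^2 = x^2+4 := w_sq x
  have hwpos : 0 < w := w_pos x
  have hwx : x ≤ w := w_ge_x x
  have hw2' : 2 ≤ w := w_ge_two x
  constructor
  · -- key: x^3 + 3x ≤ w*(1+x^2)
    have hkey : x^3 + 3*x ≤ w*(1+x^2) := by
      nlinarith [sq_nonneg (w*(1+x^2) - (x^3+3*x)), sq_nonneg x, mul_nonneg hx hwpos.le,
        mul_pos hwpos (by positivity : (0:ℝ) < 1+x^2)]
    unfold gfun
    have hq : x / Real.sqrt (x^2+4) * Real.sqrt (x^2+4) = x :=
      div_mul_cancel₀ x (w_pos x).ne'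
    nlinarith [hkey, w_sq x, w_pos x, hq]
  · have h1 : x / w ≤ 1 := by rw [div_le_one hwpos]; exact hwx
    have h2 : 0 ≤ x * gfun x := by
      apply mul_nonneg hx
      unfold gfun
      linarith
    linarith

lemma f'_abs_le {x : ℝ} (hx : 0 ≤ x) : |f'fun x| ≤ Real.exp (-x^2/2) := by
  obtain ⟨h1, h2⟩ := inner_bounds hx
  unfold f'fun
  rw [abs_mul]
  have hφ : |φ0 x| = Real.exp (-x^2/2) := abs_of_pos (phi0_pos x)
  rw [hφ]
  have : |(x / Real.sqrt (x^2+4) - 1) / 2 - x * gfun x| ≤ 1 := abs_le.mpr ⟨h1, h2.trans zero_le_one⟩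
  calc Real.exp (-x^2/2) * |(x / Real.sqrt (x^2+4) - 1) / 2 - x * gfun x|
      ≤ Real.exp (-x^2/2) * 1 := by
        exact mul_le_mul_of_nonneg_left this (Real.exp_pos _).le
    _ = Real.exp (-x^2/2) := mul_one _

lemma neg_f'_le {x : ℝ} (hx : 0 ≤ x) : -f'fun x ≤ Real.exp (-x^2/2) :=
  (neg_le_abs _).trans (f'_abs_le hx)

lemma continuous_ffun : Continuous ffun := by
  apply Continuous.mul
  · exact Real.continuous_exp.comp (by continuity)
  · apply Continuous.div_const
    exact (Real.continuous_sqrt.comp (by continuity)).sub continuous_id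

lemma continuous_f'fun : Continuous f'fun := by
  apply Continuous.mul
  · exact Real.continuous_exp.comp (by continuity)
  · apply Continuous.sub
    · apply Continuous.div_const
      apply Continuous.sub _ continuous_const
      apply Continuous.div continuous_id (Real.continuous_sqrt.comp (by continuity))
      intro x
      exact (w_pos x).ne'
    · exact continuous_id.mul (((Real.continuous_sqrt.comp (by continuity)).sub
        continuous_id).div_const 2)

lemma integrable_phi : Integrable (fun x : ℝ => Real.exp (-x^2/2)) := by
  have h := integrable_exp_neg_mul_sq (show (0:ℝ) < 1/2 by norm_num)
  convert h using 2 with x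
  ring_nf

lemma gfun_nonneg (x : ℝ) : 0 ≤ gfun x := by
  unfold gfun
  linarith [w_ge_x x]

lemma tendsto_ffun : Tendsto ffun atTop (nhds 0) := by
  refine squeeze_zero' (g := fun x => 1/x)
    (Eventually.of_forall fun x => mul_nonneg (phi0_pos x).le (gfun_nonneg x)) ?_ ?_
  · filter_upwards [eventually_gt_atTop 0] with x hx
    show ffun x ≤ 1/x
    have hw2 : (Real.sqrt (x^2+4))^2 = x^2+4 := w_sq x
    have hwx : x ≤ Real.sqrt (x^2+4) := w_ge_x x
    have hg : gfun x ≤ 1/x := by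
      unfold gfun
      rw [div_le_div_iff₀ (by norm_num) hx]
      nlinarith [sq_nonneg (x * Real.sqrt (x^2+4) - x^2 - 2)]
    have hφ : φ0 x ≤ 1 := Real.exp_le_one_iff.mpr (by nlinarith [sq_nonneg x])
    calc ffun x = φ0 x * gfun x := rfl
      _ ≤ 1 * (1/x) := by
          apply mul_le_mul hφ hg (gfun_nonneg x) zero_le_one
      _ = 1/x := one_mul _
  · simpa using tendsto_inv_atTop_zero

/-- Birnbaum's lower bound for the Gaussian tail integral. -/
lemma keyA {s : ℝ} (hs : 0 ≤ s) :
    Real.exp (-s^2/2) * ((Real.sqrt (s^2+4) - s) / 2) ≤ ∫ x in Ioi s, Real.exp (-x^2/2) := by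
  have hφint : IntegrableOn (fun x : ℝ => Real.exp (-x^2/2)) (Ioi s) :=
    integrable_phi.integrableOn
  have hf'int : IntegrableOn f'fun (Ioi s) := by
    apply Integrable.mono hφint (continuous_f'fun.aestronglyMeasurable.restrict)
    filter_upwards [ae_restrict_mem measurableSet_Ioi] with x hx
    rw [Real.norm_eq_abs, Real.norm_eq_abs, abs_of_pos (Real.exp_pos _)]
    exact f'_abs_le (hs.trans (le_of_lt hx))
  have hEq : ∫ x in Ioi s, f'fun x = 0 - ffun s :=
    integral_Ioi_of_hasDerivAt_of_tendsto
      (continuous_ffun.continuousWithinAt)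
      (fun x _ => hasDerivAt_ffun x) hf'int tendsto_ffun
  have hneg : ∫ x in Ioi s, (-f'fun x) = ffun s := by
    rw [integral_neg, hEq]; ring
  have hmono : ∫ x in Ioi s, (-f'fun x) ≤ ∫ x in Ioi s, Real.exp (-x^2/2) := by
    apply setIntegral_mono_on hf'int.neg hφint measurableSet_Ioi
    intro x hx
    exact neg_f'_le (hs.trans (le_of_lt hx))
  rw [hneg] at hmono
  exact hmono

lemma key_geom {b s w : ℝ} (hb : 0 ≤ b) (hs : 0 ≤ s) (hw : 0 ≤ w)
    (hw2 : w^2 = s^2+4) (hbs : b*s ≤ b^2 - 1) : 2 + b*s ≤ b*w := by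
  have hsq : (2 + b*s)^2 ≤ (b*w)^2 := by nlinarith [hw2, hbs, sq_nonneg b, mul_nonneg hb hs]
  have h1' := Real.sqrt_le_sqrt hsq
  rwa [Real.sqrt_sq (by positivity), Real.sqrt_sq (mul_nonneg hb hw)] at h1'

end HNQB

end HNQBsec

open HNQB

set_option maxHeartbeats 1000000 in
/-- Quantile lower bound for the half-normal distribution: if `p/d ≥ 3`
and `t ≥ 0` satisfies `P(|g| ≤ t) ≥ 1 - d/p` for `g ~ N(0,1)`, then
`t ≥ √(2 log(2p/d) - log log(2p/d) - log(4π))`; i.e.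
`F⁻¹(1 - d/p) ≥ √(2 log(2p/d) - log log(2p/d) - log(4π))`. -/
theorem half_normal_quantile_lower_bound (p d : ℕ) (hd : 0 < d) (h3 : 3 * d ≤ p)
    (t : ℝ) (ht : 0 ≤ t)
    (hq : 1 - (d : ℝ) / p ≤ ((gaussianReal 0 1) {x : ℝ | |x| ≤ t}).toReal) :
    Real.sqrt (2 * Real.log (2 * p / d) - Real.log (Real.log (2 * p / d)) -
      Real.log (4 * Real.pi)) ≤ t := by
  -- basic positivity facts
  have hdpos : (0:ℝ) < d := by exact_mod_cast hd
  have hppos : (0:ℝ) < p := by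
    have : 0 < p := lt_of_lt_of_le (by positivity) h3
    exact_mod_cast this
  set u : ℝ := 2 * (p:ℝ) / (d:ℝ) with hu_def
  have hu_pos : 0 < u := by positivity
  have hu6 : 6 ≤ u := by
    rw [hu_def, le_div_iff₀ hdpos]
    have : (3:ℝ) * d ≤ p := by exact_mod_cast h3
    linarith
  set pdf : ℝ → ℝ := gaussianPDFReal 0 1 with hpdf_def
  have hpdf_nonneg : ∀ x, 0 ≤ pdf x := gaussianPDFReal_nonneg 0 1
  have hpdf_pos : ∀ x, 0 < pdf x := fun x => gaussianPDFReal_pos 0 1 x one_ne_zero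
  have hpdfInt : Integrable pdf := integrable_gaussianPDFReal 0 1
  have hpdf_eq : ∀ x, pdf x = (Real.sqrt (2*Real.pi))⁻¹ * Real.exp (-x^2/2) := by
    intro x
    simp [hpdf_def, gaussianPDFReal]
  have hpdf_even : ∀ x, pdf (-x) = pdf x := by
    intro x
    rw [hpdf_eq, hpdf_eq, neg_sq]
  clear_value pdf
  -- rewrite the measure as an integral over Icc
  have hsetIcc : {x : ℝ | |x| ≤ t} = Icc (-t) t := by
    ext x; simp [abs_le]
  have htoReal : ((gaussianReal 0 1) {x : ℝ | |x| ≤ t}).toReal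
      = ∫ x in Icc (-t) t, pdf x := by
    rw [gaussianReal_apply_eq_integral 0 one_ne_zero, hsetIcc, ← hpdf_def,
      ENNReal.toReal_ofReal (setIntegral_nonneg measurableSet_Icc fun x _ => hpdf_nonneg x)]
  rw [htoReal] at hq
  -- tail bound: ∫ over Ioi t ≤ d/(2p)
  have htotal : ∫ x, pdf x = 1 := by
    rw [hpdf_def]; exact integral_gaussianPDFReal_eq_one 0 one_ne_zero
  have h1 : (∫ x in Iic t, pdf x) + ∫ x in Ioi t, pdf x = 1 := by
    rw [intervalIntegral.integral_Iic_add_Ioi hpdfInt.integrableOn hpdfInt.integrableOn, htotal]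
  have h2 : (∫ x in Iic (-t), pdf x) + ∫ x in Ioc (-t) t, pdf x = ∫ x in Iic t, pdf x := by
    rw [← setIntegral_union (Iic_disjoint_Ioc le_rfl) measurableSet_Ioc
      hpdfInt.integrableOn hpdfInt.integrableOn, Iic_union_Ioc_eq_Iic (by linarith : -t ≤ t)]
  have h3' : ∫ x in Iic (-t), pdf x = ∫ x in Ioi t, pdf x := by
    rw [← integral_comp_neg_Ioi]
    exact setIntegral_congr_fun measurableSet_Ioi fun x _ => hpdf_even x
  have h4 : ∫ x in Icc (-t) t, pdf x = ∫ x in Ioc (-t) t, pdf x :=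
    integral_Icc_eq_integral_Ioc
  have htail : ∫ x in Ioi t, pdf x ≤ (d:ℝ) / (2*p) := by
    have : (d:ℝ)/(2*p) = ((d:ℝ)/p)/2 := by ring
    rw [this]
    rw [h4] at hq
    linarith
  -- the radicand
  set R : ℝ := 2 * Real.log (2 * p / d) - Real.log (Real.log (2 * p / d)) -
      Real.log (4 * Real.pi) with hR_def
  have huu : (2 * (p:ℝ) / (d:ℝ)) = u := rfl
  rcases le_or_gt R 0 with hR | hR
  · have h0 : Real.sqrt R ≤ 0 := by
      rw [← Real.sqrt_zero]
      exact Real.sqrt_le_sqrt hR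
    exact h0.trans ht
  -- main case
  by_contra hts
  push_neg at hts
  set s : ℝ := Real.sqrt R with hs_def
  have hs_nonneg : 0 ≤ s := Real.sqrt_nonneg R
  have hs2 : s^2 = R := Real.sq_sqrt hR.le
  -- log facts
  have hlogu1 : 1 ≤ Real.log u := by
    rw [Real.le_log_iff_exp_le hu_pos]
    have := Real.exp_one_lt_d9
    linarith
  have hlogu_pos : 0 < Real.log u := by linarith
  have hlog4pi : 2 ≤ Real.log (4*Real.pi) := by
    rw [Real.le_log_iff_exp_le (by positivity)]
    have he := Real.exp_one_lt_d9
    have hpi := Real.pi_gt_three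
    have h2 : Real.exp 2 = Real.exp 1 * Real.exp 1 := by
      rw [← Real.exp_add]; norm_num
    nlinarith [Real.exp_pos 1]
  have hloglog : 0 ≤ Real.log (Real.log u) := Real.log_nonneg hlogu1
  -- value of exp(-s²/2)
  have hexp : Real.exp (-s^2/2)
      = Real.sqrt (Real.log u) * Real.sqrt (4*Real.pi) / u := by
    rw [hs2, hR_def, huu]
    have e1 : Real.exp (Real.log (Real.log u) / 2) = Real.sqrt (Real.log u) := by
      rw [Real.exp_half, Real.exp_log hlogu_pos]
    have e2 : Real.exp (Real.log (4*Real.pi) / 2) = Real.sqrt (4*Real.pi) := by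
      rw [Real.exp_half, Real.exp_log (by positivity)]
    have e3 : Real.exp (-Real.log u) = u⁻¹ := by
      rw [Real.exp_neg, Real.exp_log hu_pos]
    have harg : -(2 * Real.log u - Real.log (Real.log u) - Real.log (4*Real.pi))/2
        = -Real.log u + (Real.log (Real.log u)/2 + Real.log (4*Real.pi)/2) := by ring
    rw [harg, Real.exp_add, Real.exp_add, e1, e2, e3]
    field_simp
  -- b = sqrt(2 log u)
  set b : ℝ := Real.sqrt (2 * Real.log u) with hb_def
  have hb_nonneg : 0 ≤ b := Real.sqrt_nonneg _
  have hb2 : b^2 = 2 * Real.log u := Real.sq_sqrt (by positivity)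
  have hbs : b * s ≤ b^2 - 1 := by
    have hmul : b * s = Real.sqrt ((2 * Real.log u) * R) := by
      rw [hb_def, hs_def]
      exact (Real.sqrt_mul (by positivity) R).symm
    have hRle : R ≤ 2 * Real.log u - 2 := by
      rw [hR_def, huu]; linarith
    have hle : (2 * Real.log u) * R ≤ (2 * Real.log u - 1)^2 := by nlinarith
    have := Real.sqrt_le_sqrt hle
    rw [Real.sqrt_sq (by linarith : (0:ℝ) ≤ 2 * Real.log u - 1)] at this
    rw [hmul]
    linarith [hb2]
  -- the key geometric inequality : 2 + b*s ≤ b * sqrt(s²+4)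
  set w : ℝ := Real.sqrt (s^2+4) with hw_def
  have hw2 : w^2 = s^2+4 := HNQB.w_sq s
  have hw_nonneg : 0 ≤ w := Real.sqrt_nonneg _
  clear_value u R s b w
  have hkey : 2 + b * s ≤ b * w :=
    HNQB.key_geom hb_nonneg hs_nonneg hw_nonneg hw2 hbs
  -- sqrt(4π) = sqrt 2 * sqrt (2π)
  have h4pi : Real.sqrt (4*Real.pi) = Real.sqrt 2 * Real.sqrt (2*Real.pi) := by
    rw [← Real.sqrt_mul (by norm_num : (0:ℝ) ≤ 2)]
    norm_num [show (2:ℝ) * (2 * Real.pi) = 4 * Real.pi by ring]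
  have hb_eq : Real.sqrt 2 * Real.sqrt (Real.log u) = b := by
    rw [hb_def, Real.sqrt_mul (by norm_num : (0:ℝ) ≤ 2)]
  -- lower bound for the tail at s
  have hlow : 1/u ≤ ∫ x in Ioi s, pdf x := by
    have hA := HNQB.keyA hs_nonneg
    rw [← hw_def] at hA
    have hval : ∫ x in Ioi s, pdf x
        = (Real.sqrt (2*Real.pi))⁻¹ * ∫ x in Ioi s, Real.exp (-x^2/2) := by
      rw [← integral_const_mul]
      exact setIntegral_congr_fun measurableSet_Ioi fun x _ => hpdf_eq x
    have hsqrt2pi_pos : 0 < Real.sqrt (2*Real.pi) := Real.sqrt_pos.mpr (by positivity)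
    have step : (Real.sqrt (2*Real.pi))⁻¹ * (Real.exp (-s^2/2) * ((w - s)/2))
        ≤ ∫ x in Ioi s, pdf x := by
      rw [hval]
      exact mul_le_mul_of_nonneg_left hA (by positivity)
    refine le_trans ?_ step
    rw [hexp, h4pi]
    have hexpand : (Real.sqrt (2*Real.pi))⁻¹ *
        (Real.sqrt (Real.log u) * (Real.sqrt 2 * Real.sqrt (2*Real.pi)) / u * ((w - s)/2))
        = b * (w - s) / (2 * u) := by
      rw [← hb_eq]
      field_simp
    rw [hexpand]
    rw [div_le_div_iff₀ hu_pos (by positivity)]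
    nlinarith
  -- strict monotonicity of the tail
  have hsplit : ∫ x in Ioi t, pdf x
      = (∫ x in Ioc t s, pdf x) + ∫ x in Ioi s, pdf x := by
    rw [← setIntegral_union (Ioc_disjoint_Ioi le_rfl) measurableSet_Ioi
      hpdfInt.integrableOn hpdfInt.integrableOn, Ioc_union_Ioi_eq_Ioi hts.le]
  have hposmid : 0 < ∫ x in Ioc t s, pdf x := by
    rw [← intervalIntegral.integral_of_le hts.le]
    apply intervalIntegral.intervalIntegral_pos_of_pos_on
    · exact hpdfInt.intervalIntegrable
    · exact fun x _ => hpdf_pos x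
    · exact hts
  -- contradiction
  have huinv : 1/u = (d:ℝ)/(2*p) := by
    rw [hu_def]
    field_simp
  rw [huinv] at hlow
  linarith
end
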